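/- arXiv:1812.10669 — 5 statements merged into one kernel-verified Lean document; each statement's English description precedes it below -/
import Mathlib

section
/- Let T be a topological space in which every sequence has a cluster point (T countably compact), with a distinguished point ∞ ∈ T, let X be a real Banach space, and let f : T → X be a function satisfying: (i) f(∞) = 0; (ii) the subspace Y := {x* ∈ X* : x* ∘ f is continuous on T} is norming and norm-closed; (iii) there exist ε > 0 and x*_∞ ∈ X* such that the set D := {t ∈ T : x*_∞(f(t)) > ε} intersects every Gδ-set containing ∞. Then x*_∞ ∉ Y, and for every norm-bounded set K ⊆ Y ⊕ ℝx*_∞ with x*_∞ in the w*-closure of K ∩ Y, the w*-closure of K ∩ Y is not contained in Y ⊕ ℝx*_∞; in particular no such K is w*-compact, so X fails condition (LK) and is not fully Mackey complete. -/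
open Filter Topology

noncomputable section

variable (X : Type*) [NormedAddCommGroup X] [NormedSpace ℝ X]

/-- The dual norm of an element of the weak-star dual. -/
def dnorm (y : WeakDual ℝ X) : ℝ := ‖WeakDual.toStrongDual y‖

/-- A subspace `Y ⊆ X*` is norming if there is `c > 0` with
`c·‖x‖ ≤ sup {y x : y ∈ Y, ‖y‖ ≤ 1}` for every `x ∈ X`. -/
def IsNorming (Y : Submodule ℝ (WeakDual ℝ X)) : Prop :=
  ∃ c > 0, ∀ x : X, c * ‖x‖ ≤ sSup {r : ℝ | ∃ y ∈ Y, dnorm X y ≤ 1 ∧ r = y x}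

/-- `Y` is closed for the dual norm topology of `X*`. -/
def NormClosed (Y : Submodule ℝ (WeakDual ℝ X)) : Prop :=
  IsClosed ((fun y => WeakDual.toStrongDual y) '' (Y : Set (WeakDual ℝ X)))

/-- A linear functional on `Y ⊆ X*` is weak-star sequentially continuous. -/
def WStarSeqCont {Y : Submodule ℝ (WeakDual ℝ X)} (f : Y →ₗ[ℝ] ℝ) : Prop :=
  ∀ (u : ℕ → Y) (y : Y),
    Tendsto (fun n => (u n : WeakDual ℝ X)) atTop (𝓝 (y : WeakDual ℝ X)) →
      Tendsto (fun n => f (u n)) atTop (𝓝 (f y))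

/-- `(Y, w*)` has the Mazur property: every weak-star sequentially continuous
linear functional on `Y` is weak-star continuous. -/
def MazurProp (Y : Submodule ℝ (WeakDual ℝ X)) : Prop :=
  ∀ f : Y →ₗ[ℝ] ℝ, WStarSeqCont X f → Continuous f

/-- `X` is fully Mazur. -/
def FullyMazur : Prop :=
  ∀ Y : Submodule ℝ (WeakDual ℝ X), IsNorming X Y → NormClosed X Y → MazurProp X Y

/-- The Grothendieck condition on a linear functional `f : Y → ℝ`: the restriction of `f`
to every absolutely convex weak-star compact subset of `Y` is weak-star continuous. -/
def GrothendieckCond {Y : Submodule ℝ (WeakDual ℝ X)} (f : Y →ₗ[ℝ] ℝ) : Prop :=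
  ∀ K : Set (WeakDual ℝ X), K ⊆ (Y : Set (WeakDual ℝ X)) → Convex ℝ K → Balanced ℝ K →
    IsCompact K → ContinuousOn (fun y : Y => f y) (Subtype.val ⁻¹' K)

/-- Completeness of the Mackey space `(X, μ(X,Y))`, via Grothendieck's criterion. -/
def MackeyComplete (Y : Submodule ℝ (WeakDual ℝ X)) : Prop :=
  ∀ f : Y →ₗ[ℝ] ℝ, GrothendieckCond X f → Continuous f

/-- `X` is fully Mackey complete. -/
def FullyMackeyComplete : Prop :=
  ∀ Y : Submodule ℝ (WeakDual ℝ X), IsNorming X Y → NormClosed X Y → MackeyComplete X Y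

/-- `S₁(A)`: the set of weak-star limits of sequences contained in `A`. -/
def S1 (A : Set (WeakDual ℝ X)) : Set (WeakDual ℝ X) :=
  {z | ∃ u : ℕ → WeakDual ℝ X, (∀ n, u n ∈ A) ∧ Tendsto u atTop (𝓝 z)}

end

section St9Aux

open Filter Topology Set

private lemma st9_mapClusterPt_mem_closed {α β : Type*} [TopologicalSpace β] {a : β}
    {l : Filter α} {v : α → β} (h : MapClusterPt a l v) {s : Set β} (hs : IsClosed s)
    (hv : ∀ᶠ n in l, v n ∈ s) : a ∈ s := by
  have hmem : s ∈ Filter.map v l := Filter.mem_map.2 (hv.mono fun n hn => hn)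
  have h2 : ClusterPt a (𝓟 s) := h.clusterPt.mono (Filter.le_principal_iff.2 hmem)
  rw [← hs.closure_eq]
  exact mem_closure_iff_clusterPt.2 h2

private lemma st9_mapClusterPt_eq_of_tendsto {α β : Type*} [TopologicalSpace β] [T2Space β]
    {a b : β} {l : Filter α} [l.NeBot] {v : α → β} (h : MapClusterPt a l v)
    (h2 : Tendsto v l (𝓝 b)) : a = b := by
  have hne : (𝓝 a ⊓ 𝓝 b).NeBot := by
    have hle : 𝓝 a ⊓ Filter.map v l ≤ 𝓝 a ⊓ 𝓝 b := inf_le_inf_left _ h2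
    exact h.clusterPt.neBot.mono hle
  exact eq_of_nhds_neBot hne

variable {X : Type*} [NormedAddCommGroup X] [NormedSpace ℝ X]

private lemma st9_wd_add_apply (a b : WeakDual ℝ X) (x : X) : (a + b) x = a x + b x := rfl
private lemma st9_wd_sub_apply (a b : WeakDual ℝ X) (x : X) : (a - b) x = a x - b x := rfl
private lemma st9_wd_smul_apply (c : ℝ) (a : WeakDual ℝ X) (x : X) : (c • a) x = c * a x := rfl
private lemma st9_wd_zero_apply (x : X) : (0 : WeakDual ℝ X) x = 0 := rfl

private lemma st9_abs_apply_le (φ : WeakDual ℝ X) (x : X) : |φ x| ≤ dnorm X φ * ‖x‖ := by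
  have h := (WeakDual.toStrongDual (𝕜 := ℝ) (E := X) φ).le_opNorm x
  simpa [dnorm, WeakDual.toStrongDual_apply, Real.norm_eq_abs] using h

private lemma st9_dnorm_zero : dnorm X (0 : WeakDual ℝ X) = 0 := by
  simp [dnorm]

private lemma st9_bound_of_compact [CompleteSpace X] {K : Set (WeakDual ℝ X)}
    (hK : IsCompact K) : ∃ M : ℝ, ∀ φ ∈ K, dnorm X φ ≤ M := by
  have hpt : ∀ x : X, ∃ C : ℝ, ∀ i : K,
      ‖WeakDual.toStrongDual (i : WeakDual ℝ X) x‖ ≤ C := by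
    intro x
    have hc : Continuous fun φ : WeakDual ℝ X => ‖φ x‖ := (WeakDual.eval_continuous x).norm
    obtain ⟨C, hC⟩ := (hK.image hc).bddAbove
    exact ⟨C, fun i => by
      have := hC (Set.mem_image_of_mem _ i.2)
      simpa [WeakDual.toStrongDual_apply] using this⟩
  obtain ⟨C, hC⟩ := banach_steinhaus hpt
  exact ⟨C, fun φ hφ => hC ⟨φ, hφ⟩⟩

private lemma st9_isCompact_closure {C : Set (WeakDual ℝ X)} {M : ℝ}
    (hC : ∀ φ ∈ C, dnorm X φ ≤ M) : IsCompact (closure C) := by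
  have hsub : C ⊆ WeakDual.toStrongDual ⁻¹' Metric.closedBall 0 M := by
    intro φ hφ
    simp only [Set.mem_preimage, Metric.mem_closedBall, dist_zero_right]
    exact hC φ hφ
  exact (WeakDual.isCompact_closedBall (𝕜 := ℝ) (E := X) 0 M).of_isClosed_subset isClosed_closure
    (closure_minimal hsub (WeakDual.isClosed_closedBall (𝕜 := ℝ) (E := X) 0 M))

private lemma st9_norming_zero {Y : Submodule ℝ (WeakDual ℝ X)} (hYn : IsNorming X Y)
    {x : X} (hx : ∀ y ∈ Y, (y : WeakDual ℝ X) x = 0) : x = 0 := by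
  obtain ⟨c, hc, h⟩ := hYn
  have hset : {r : ℝ | ∃ y ∈ Y, dnorm X y ≤ 1 ∧ r = y x} = {0} := by
    apply Set.eq_singleton_iff_unique_mem.2
    refine ⟨⟨0, Y.zero_mem, by simp [st9_dnorm_zero], (st9_wd_zero_apply x).symm⟩, ?_⟩
    rintro r ⟨y, hy, -, rfl⟩
    exact hx y hy
  have hle := h x
  rw [hset, csSup_singleton] at hle
  have : ‖x‖ ≤ 0 := by nlinarith [norm_nonneg x]
  exact norm_le_zero_iff.1 this

private lemma st9_interp {Y : Submodule ℝ (WeakDual ℝ X)} (hYn : IsNorming X Y)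
    (φ : WeakDual ℝ X) (F : Finset X) :
    ∃ y ∈ Y, ∀ x ∈ F, (y : WeakDual ℝ X) x = φ x := by
  classical
  let R : WeakDual ℝ X →ₗ[ℝ] (↥F → ℝ) :=
    { toFun := fun ψ => fun i => ψ (i : X)
      map_add' := fun a b => rfl
      map_smul' := fun c a => rfl }
  by_cases hmem : R φ ∈ Y.map R
  · obtain ⟨y, hy, hEq⟩ := hmem
    refine ⟨y, hy, fun x hx => ?_⟩
    have := congrFun hEq (⟨x, hx⟩ : ↥F)
    exact this
  · exfalso
    obtain ⟨ℓ, hℓφ, hℓY⟩ := Submodule.exists_dual_map_eq_bot_of_notMem hmem inferInstance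
    set x₀ : X := ∑ i : ↥F, ℓ (fun j => if i = j then 1 else 0) • (i : X) with hx₀
    have key : ∀ ψ : WeakDual ℝ X, ψ x₀ = ℓ (R ψ) := by
      intro ψ
      rw [LinearMap.pi_apply_eq_sum_univ ℓ (R ψ), hx₀, map_sum]
      refine Finset.sum_congr rfl fun i _ => ?_
      rw [map_smul]
      simp only [R, LinearMap.coe_mk, AddHom.coe_mk, smul_eq_mul]
      exact mul_comm _ _
    have hY0 : ∀ y ∈ Y, (y : WeakDual ℝ X) x₀ = 0 := by
      intro y hy
      rw [key]
      have hb : ℓ (R y) ∈ (Y.map R).map ℓ :=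
        Submodule.mem_map_of_mem (Submodule.mem_map_of_mem hy)
      rw [hℓY] at hb
      simpa using hb
    have hx0 : x₀ = 0 := st9_norming_zero hYn hY0
    apply hℓφ
    rw [← key φ, hx0]
    exact map_zero φ

private lemma st9_dense {Y : Submodule ℝ (WeakDual ℝ X)} (hYn : IsNorming X Y)
    (φ : WeakDual ℝ X) : φ ∈ closure (Y : Set (WeakDual ℝ X)) := by
  classical
  choose yF hyF hEq using fun F : Finset X => st9_interp hYn φ F
  have hten : Tendsto yF atTop (𝓝 φ) := by
    rw [tendsto_iff_forall_eval_tendsto_topDualPairing]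
    intro x
    refine tendsto_const_nhds.congr' ?_
    filter_upwards [Filter.eventually_ge_atTop ({x} : Finset X)] with F hF
    have hx : x ∈ F := hF (Finset.mem_singleton_self x)
    show φ x = yF F x
    exact (hEq F x hx).symm
  exact mem_closure_of_tendsto hten (Filter.Eventually.of_forall fun F => hyF F)

private lemma st9_isNorming_sup {Y : Submodule ℝ (WeakDual ℝ X)} (hYn : IsNorming X Y)
    (ξ : WeakDual ℝ X) : IsNorming X (Y ⊔ Submodule.span ℝ {ξ}) := by
  obtain ⟨c, hc, h⟩ := hYn
  refine ⟨c, hc, fun x => (h x).trans (csSup_le_csSup ?_ ?_ ?_)⟩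
  · refine ⟨‖x‖, ?_⟩
    rintro r ⟨y, hy, hn, rfl⟩
    calc (y : WeakDual ℝ X) x ≤ |(y : WeakDual ℝ X) x| := le_abs_self _
      _ ≤ dnorm X y * ‖x‖ := st9_abs_apply_le y x
      _ ≤ 1 * ‖x‖ := mul_le_mul_of_nonneg_right hn (norm_nonneg x)
      _ = ‖x‖ := one_mul _
  · exact ⟨0, 0, Y.zero_mem, by simp [st9_dnorm_zero], (st9_wd_zero_apply x).symm⟩
  · rintro r ⟨y, hy, hn, rfl⟩
    exact ⟨y, Submodule.mem_sup_left hy, hn, rfl⟩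

private lemma st9_exists_g {Y : Submodule ℝ (WeakDual ℝ X)} {ξ : WeakDual ℝ X} (hξ : ξ ∉ Y) :
    ∃ g : ↥(Y ⊔ Submodule.span ℝ {ξ}) →ₗ[ℝ] ℝ,
      (∀ v : ↥(Y ⊔ Submodule.span ℝ {ξ}), (g v = 0 ↔ (v : WeakDual ℝ X) ∈ Y)) ∧
      ∀ h : ξ ∈ Y ⊔ Submodule.span ℝ {ξ}, g ⟨ξ, h⟩ = 1 := by
  classical
  have hξY' : ξ ∈ Y ⊔ Submodule.span ℝ {ξ} :=
    Submodule.mem_sup_right (Submodule.mem_span_singleton_self ξ)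
  set Y' := Y ⊔ Submodule.span ℝ {ξ} with hY'
  set Z : Submodule ℝ ↥Y' := Y.comap Y'.subtype with hZ
  have hxz : (⟨ξ, hξY'⟩ : ↥Y') ∉ Z := by
    intro h
    exact hξ (by simpa [hZ, Submodule.mem_comap] using h)
  obtain ⟨f0, hf0, hfZ⟩ := Submodule.exists_dual_map_eq_bot_of_notMem hxz
    inferInstance
  have hZ0 : ∀ v : ↥Y', (v : WeakDual ℝ X) ∈ Y → f0 v = 0 := by
    intro v hv
    have hmem : f0 v ∈ Z.map f0 :=
      Submodule.mem_map_of_mem (by simpa [hZ, Submodule.mem_comap] using hv)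
    rwa [hfZ, Submodule.mem_bot] at hmem
  refine ⟨(f0 ⟨ξ, hξY'⟩)⁻¹ • f0, fun v => ⟨?_, ?_⟩, fun h => ?_⟩
  · intro hg
    obtain ⟨y, hy, w, hw, hsum⟩ := Submodule.mem_sup.1 v.2
    obtain ⟨a, ha⟩ := Submodule.mem_span_singleton.1 hw
    have hyY' : y ∈ Y' := Submodule.mem_sup_left hy
    have hveq : v = ⟨y, hyY'⟩ + a • (⟨ξ, hξY'⟩ : ↥Y') := by
      apply Subtype.ext
      push_cast
      rw [ha, hsum]
    have hfv : f0 v = a * f0 ⟨ξ, hξY'⟩ := by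
      rw [hveq, map_add, map_smul, hZ0 ⟨y, hyY'⟩ hy, zero_add, smul_eq_mul]
    have hgv : ((f0 ⟨ξ, hξY'⟩)⁻¹ • f0) v = a := by
      rw [LinearMap.smul_apply, hfv, smul_eq_mul]
      field_simp
    have ha0 : a = 0 := by rw [← hgv, hg]
    have hvy : (v : WeakDual ℝ X) = y := by
      rw [← hsum, ← ha, ha0, zero_smul, add_zero]
    rw [hvy]
    exact hy
  · intro hv
    rw [LinearMap.smul_apply, hZ0 v hv, smul_eq_mul, mul_zero]
  · rw [LinearMap.smul_apply, smul_eq_mul]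
    exact inv_mul_cancel₀ hf0

private lemma st9_normClosed_sup {Y : Submodule ℝ (WeakDual ℝ X)}
    (hYc : NormClosed X Y) {ξ : WeakDual ℝ X} (hξ : ξ ∉ Y) :
    NormClosed X (Y ⊔ Submodule.span ℝ {ξ}) := by
  classical
  set e : WeakDual ℝ X → StrongDual ℝ X := fun y => WeakDual.toStrongDual y with he
  set S : Set (StrongDual ℝ X) := e '' (Y : Set (WeakDual ℝ X)) with hS
  have hSc : IsClosed S := hYc
  set Ξ : StrongDual ℝ X := e ξ with hΞ
  set T : Set (StrongDual ℝ X) :=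
    e '' ((Y ⊔ Submodule.span ℝ {ξ} : Submodule ℝ (WeakDual ℝ X)) : Set (WeakDual ℝ X)) with hT
  have hTmem : ∀ w : StrongDual ℝ X, w ∈ T ↔ ∃ ψ ∈ S, ∃ a : ℝ, w = ψ + a • Ξ := by
    intro w
    constructor
    · rintro ⟨v, hv, rfl⟩
      obtain ⟨y, hy, z, hz, hsum⟩ := Submodule.mem_sup.1 hv
      obtain ⟨a, ha⟩ := Submodule.mem_span_singleton.1 hz
      refine ⟨e y, ⟨y, hy, rfl⟩, a, ?_⟩
      rw [← hsum, ← ha]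
      rfl
    · rintro ⟨ψ, ⟨y, hy, rfl⟩, a, rfl⟩
      exact ⟨y + a • ξ, Submodule.add_mem _ (Submodule.mem_sup_left hy)
        (Submodule.mem_sup_right (Submodule.smul_mem _ a (Submodule.mem_span_singleton_self ξ))),
        rfl⟩
  -- S is a closed submodule not containing Ξ
  have hSzero : (0 : StrongDual ℝ X) ∈ S := ⟨0, Y.zero_mem, map_zero _⟩
  have hSsub : ∀ ψ₁ ∈ S, ∀ ψ₂ ∈ S, ψ₁ - ψ₂ ∈ S := by
    rintro _ ⟨y₁, hy₁, rfl⟩ _ ⟨y₂, hy₂, rfl⟩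
    exact ⟨y₁ - y₂, Y.sub_mem hy₁ hy₂, map_sub _ _ _⟩
  have hSsmul : ∀ (a : ℝ), ∀ ψ ∈ S, a • ψ ∈ S := by
    rintro a _ ⟨y, hy, rfl⟩
    exact ⟨a • y, Y.smul_mem a hy, map_smul _ _ _⟩
  have hΞS : Ξ ∉ S := by
    rintro ⟨y, hy, hEq⟩
    have : y = ξ := WeakDual.toStrongDual.injective hEq
    exact hξ (this ▸ hy)
  obtain ⟨d, hd, hdist⟩ : ∃ d > 0, ∀ ψ ∈ S, d ≤ ‖Ξ - ψ‖ := by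
    have hpos : 0 < Metric.infDist Ξ S :=
      (hSc.notMem_iff_infDist_pos ⟨0, hSzero⟩).1 hΞS
    refine ⟨Metric.infDist Ξ S, hpos, fun ψ hψ => ?_⟩
    have h3 := Metric.infDist_le_dist_of_mem (x := Ξ) hψ
    rwa [dist_eq_norm] at h3
  have hkey : ∀ ψ ∈ S, ∀ a : ℝ, |a| * d ≤ ‖ψ + a • Ξ‖ := by
    intro ψ hψ a
    rcases eq_or_ne a 0 with rfl | ha
    · simpa using norm_nonneg _
    · have hmem : (-a⁻¹) • ψ ∈ S := hSsmul _ ψ hψ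
      have h1 : d ≤ ‖Ξ - (-a⁻¹) • ψ‖ := hdist _ hmem
      have habs : 0 < |a| := abs_pos.2 ha
      have h2 : Ξ - (-a⁻¹) • ψ = a⁻¹ • (ψ + a • Ξ) := by
        rw [smul_add, smul_smul, inv_mul_cancel₀ ha, one_smul, neg_smul (M := StrongDual ℝ X), sub_neg_eq_add, add_comm]
      rw [h2, norm_smul, Real.norm_eq_abs, abs_inv] at h1
      calc |a| * d ≤ |a| * (|a|⁻¹ * ‖ψ + a • Ξ‖) := mul_le_mul_of_nonneg_left h1 (abs_nonneg a)
        _ = ‖ψ + a • Ξ‖ := by field_simp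
  -- sequential closedness
  have hseq : ∀ (u : ℕ → StrongDual ℝ X) (w : StrongDual ℝ X),
      (∀ n, u n ∈ T) → Tendsto u atTop (𝓝 w) → w ∈ T := by
    intro u w hu hlim
    have h' : ∀ n, ∃ ψ ∈ S, ∃ a : ℝ, u n = ψ + a • Ξ := fun n => (hTmem (u n)).1 (hu n)
    choose ψs hψs as has using h'
    have hdiff : ∀ m n : ℕ, |as n - as m| * d ≤ ‖u n - u m‖ := by
      intro m n
      have hmem : ψs n - ψs m ∈ S := hSsub _ (hψs n) _ (hψs m)
      have : u n - u m = (ψs n - ψs m) + (as n - as m) • Ξ := by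
        rw [has n, has m, sub_smul (M := StrongDual ℝ X)]
        abel
      rw [this]
      exact hkey _ hmem _
    have hcauchy : CauchySeq as := by
      rw [Metric.cauchySeq_iff]
      intro δ hδ
      obtain ⟨N, hN⟩ := (Metric.cauchySeq_iff.1 hlim.cauchySeq) (δ * d) (by positivity)
      refine ⟨N, fun m hm n hn => ?_⟩
      have h1 := hdiff n m
      have h2 := hN m hm n hn
      rw [dist_eq_norm] at h2 ⊢
      have : |as m - as n| * d < δ * d := lt_of_le_of_lt h1 h2
      have hlt := (mul_lt_mul_iff_left₀ hd).1 this
      simpa [Real.norm_eq_abs] using hlt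
    obtain ⟨a, hlim_a⟩ := cauchySeq_tendsto_of_complete hcauchy
    have hψlim : Tendsto ψs atTop (𝓝 (w - a • Ξ)) := by
      have h1 : ∀ n, ψs n = u n - as n • Ξ := fun n => by rw [has n]; abel
      have h2 : Tendsto (fun n => u n - as n • Ξ) atTop (𝓝 (w - a • Ξ)) :=
        hlim.sub (hlim_a.smul_const Ξ)
      simpa [← h1] using h2
    have hwS : w - a • Ξ ∈ S :=
      hSc.mem_of_tendsto hψlim (Filter.Eventually.of_forall fun n => hψs n)
    rw [hTmem]
    exact ⟨w - a • Ξ, hwS, a, by abel⟩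
  exact IsSeqClosed.isClosed fun u w hu hl => hseq u w hu hl

end St9Aux


set_option maxHeartbeats 1000000 in
/-- Let `T` be countably compact with a distinguished point `∞`, and let
`f : T → X` satisfy (i) `f(∞) = 0`, (ii) `Y = {x* : x* ∘ f continuous}` is norming and
norm-closed, (iii) there are `ε > 0` and `x*_∞` such that `D = {t : x*_∞(f t) > ε}` meets
every Gδ-set containing `∞`. Then `x*_∞ ∉ Y`; for every norm-bounded `K ⊆ Y ⊕ ℝx*_∞` with
`x*_∞` in the weak-star closure of `K ∩ Y`, the weak-star closure of `K ∩ Y` is not contained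
in `Y ⊕ ℝx*_∞` and `K` is not weak-star compact; and `X` is not fully Mackey complete. -/
theorem statement9 {T : Type*} [TopologicalSpace T]
    (hT : ∀ u : ℕ → T, ∃ t : T, MapClusterPt t atTop u)
    (infty : T)
    (X : Type*) [NormedAddCommGroup X] [NormedSpace ℝ X] [CompleteSpace X]
    (f : T → X) (hf0 : f infty = 0)
    (Y : Submodule ℝ (WeakDual ℝ X))
    (hYdef : ∀ φ : WeakDual ℝ X, φ ∈ Y ↔ Continuous (fun t => φ (f t)))
    (hYn : IsNorming X Y) (hYc : NormClosed X Y)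
    (ε : ℝ) (hε : 0 < ε) (xinf : WeakDual ℝ X)
    (hD : ∀ G : ℕ → Set T, (∀ n, IsOpen (G n)) → (infty ∈ ⋂ n, G n) →
      ∃ t ∈ ⋂ n, G n, ε < xinf (f t)) :
    xinf ∉ Y ∧
    (∀ K : Set (WeakDual ℝ X), (∃ M : ℝ, ∀ y ∈ K, dnorm X y ≤ M) →
      K ⊆ ((Y ⊔ Submodule.span ℝ {xinf} : Submodule ℝ (WeakDual ℝ X)) :
            Set (WeakDual ℝ X)) →
      xinf ∈ closure (K ∩ (Y : Set (WeakDual ℝ X))) →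
      ¬ (closure (K ∩ (Y : Set (WeakDual ℝ X))) ⊆
          ((Y ⊔ Submodule.span ℝ {xinf} : Submodule ℝ (WeakDual ℝ X)) :
            Set (WeakDual ℝ X))) ∧ ¬ IsCompact K) ∧
    ¬ FullyMackeyComplete X := by
  classical
  have hopen1 : ∀ φ : WeakDual ℝ X, φ ∈ Y → ∀ δ : ℝ, IsOpen {u : T | |φ (f u)| < δ} := by
    intro φ hφ δ
    exact isOpen_lt (((hYdef φ).1 hφ).abs) continuous_const
  have hinfty1 : ∀ (φ : WeakDual ℝ X) (δ : ℝ), 0 < δ → infty ∈ {u : T | |φ (f u)| < δ} := by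
    intro φ δ hδ
    simp only [Set.mem_setOf_eq, hf0, map_zero, abs_zero]
    exact hδ
  -- Part 1 : xinf ∉ Y
  have hxY : xinf ∉ Y := by
    intro hmem
    have hc : Continuous fun u : T => xinf (f u) := (hYdef xinf).1 hmem
    have hopen : IsOpen {u : T | xinf (f u) < ε} := isOpen_lt hc continuous_const
    have hinfty : infty ∈ ⋂ _n : ℕ, {u : T | xinf (f u) < ε} := by
      refine Set.mem_iInter.2 fun _ => ?_
      simp only [Set.mem_setOf_eq, hf0, map_zero]
      exact hε
    obtain ⟨t, htmem, htx⟩ := hD (fun _ => {u : T | xinf (f u) < ε}) (fun _ => hopen) hinfty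
    have hlt := Set.mem_iInter.1 htmem 0
    simp only [Set.mem_setOf_eq] at hlt
    linarith
  -- The main engine
  have engine : ∀ (K : Set (WeakDual ℝ X)) (M : ℝ), (∀ y ∈ K, dnorm X y ≤ M) →
      xinf ∈ closure (K ∩ (Y : Set (WeakDual ℝ X))) →
      closure (K ∩ (Y : Set (WeakDual ℝ X))) ⊆
        ((Y ⊔ Submodule.span ℝ {xinf} : Submodule ℝ (WeakDual ℝ X)) :
          Set (WeakDual ℝ X)) →
      False := by
    intro K M hM hx hcl
    set C : Set (WeakDual ℝ X) := K ∩ (Y : Set (WeakDual ℝ X)) with hCdef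
    have hCapprox : ∀ U : Set (WeakDual ℝ X), IsOpen U → xinf ∈ U → ∃ φ, φ ∈ C ∧ φ ∈ U := by
      intro U hU hxU
      obtain ⟨φ, hφU, hφC⟩ := _root_.mem_closure_iff.1 hx U hU hxU
      exact ⟨φ, hφC, hφU⟩
    set P : ℕ × T × WeakDual ℝ X → Prop := fun p =>
      ε < xinf (f p.2.1) ∧ p.2.2 ∈ C ∧ ε < p.2.2 (f p.2.1) with hPdef
    set r : ℕ × T × WeakDual ℝ X → ℕ × T × WeakDual ℝ X → Prop := fun p q =>
      p.1 < q.1 ∧ ε < q.2.2 (f p.2.1) ∧ |p.2.2 (f q.2.1)| < 1 / (q.1 + 1) with hrdef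
    have hstep : ∀ s : Finset (ℕ × T × WeakDual ℝ X), (∀ p ∈ s, P p) →
        ∃ q, P q ∧ ∀ p ∈ s, r p q := by
      intro s hs
      set k : ℕ := s.sup (fun p => p.1) + 1 with hkdef
      have hδk : (0:ℝ) < 1 / (k + 1) := by positivity
      have hGopen : IsOpen {u : T | ∀ p ∈ s, |p.2.2 (f u)| < 1 / (k + 1)} := by
        have hEq : {u : T | ∀ p ∈ s, |p.2.2 (f u)| < 1 / (k + 1)} =
            ⋂ p ∈ s, {u : T | |p.2.2 (f u)| < 1 / (k + 1)} := by
          ext u; simp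
        rw [hEq]
        exact isOpen_biInter_finset fun p hp => hopen1 _ ((hs p hp).2.1).2 _
      have hGinf : infty ∈ ⋂ _n : ℕ, {u : T | ∀ p ∈ s, |p.2.2 (f u)| < 1 / (k + 1)} :=
        Set.mem_iInter.2 fun _ p hp => hinfty1 _ _ hδk
      obtain ⟨t0, ht0mem, ht0x⟩ := hD _ (fun _ => hGopen) hGinf
      have ht0small : ∀ p ∈ s, |p.2.2 (f t0)| < 1 / (k + 1) := Set.mem_iInter.1 ht0mem 0
      set U : Set (WeakDual ℝ X) :=
        {ψ : WeakDual ℝ X | ε < ψ (f t0)} ∩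
          ⋂ p ∈ s, {ψ : WeakDual ℝ X | ε < ψ (f p.2.1)} with hUdef
      have hUopen : IsOpen U := by
        refine IsOpen.inter (isOpen_lt continuous_const (WeakDual.eval_continuous _)) ?_
        exact isOpen_biInter_finset fun p hp =>
          isOpen_lt continuous_const (WeakDual.eval_continuous _)
      have hxU : xinf ∈ U := ⟨ht0x, Set.mem_iInter₂.2 fun p hp => (hs p hp).1⟩
      obtain ⟨y0, hy0C, hy0U⟩ := hCapprox U hUopen hxU
      refine ⟨(k, t0, y0), ⟨ht0x, hy0C, hy0U.1⟩, fun p hp => ?_⟩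
      exact ⟨Nat.lt_succ_of_le (Finset.le_sup hp), Set.mem_iInter₂.1 hy0U.2 p hp, ht0small p hp⟩
    obtain ⟨w, hPw, hrw⟩ := exists_seq_of_forall_finset_exists P r hstep
    set t : ℕ → T := fun n => (w n).2.1 with htdef
    set y : ℕ → WeakDual ℝ X := fun n => (w n).2.2 with hydef
    set k : ℕ → ℕ := fun n => (w n).1 with hkdef
    have hkmono : StrictMono k :=
      strictMono_nat_of_lt_succ fun n => (hrw n (n+1) (Nat.lt_succ_self n)).1
    have P1 : ∀ n, ε < xinf (f (t n)) := fun n => (hPw n).1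
    have P2 : ∀ n, y n ∈ C := fun n => (hPw n).2.1
    have P3 : ∀ m n, m ≤ n → ε < y n (f (t m)) := by
      intro m n hmn
      rcases eq_or_lt_of_le hmn with rfl | h
      · exact (hPw m).2.2
      · exact (hrw m n h).2.1
    have P4' : ∀ m n, m < n → |y m (f (t n))| ≤ 1 / ((n:ℝ) + 1) := by
      intro m n h
      refine ((hrw m n h).2.2).le.trans ?_
      have h1 : (n : ℝ) + 1 ≤ (k n : ℝ) + 1 := by
        have h2 := hkmono.le_apply (x := n)
        have : (n : ℝ) ≤ (k n : ℝ) := by exact_mod_cast h2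
        linarith
      exact one_div_le_one_div_of_le (by positivity) h1
    obtain ⟨tstar, htstar⟩ := hT t
    have hCbound : ∀ φ ∈ C, dnorm X φ ≤ M := fun φ hφ => hM φ hφ.1
    have hcc : IsCompact (closure C) := st9_isCompact_closure hCbound
    have hmapy : Filter.map y atTop ≤ 𝓟 (closure C) :=
      Filter.le_principal_iff.2
        (Filter.mem_map.2 (Filter.Eventually.of_forall fun n => subset_closure (P2 n)))
    obtain ⟨z, hzmem, hzclus⟩ := hcc.exists_mapClusterPt hmapy
    have hclz : ∀ x : X, MapClusterPt (z x) atTop (fun n => y n x) := by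
      intro x
      have h1 := MapClusterPt.continuousAt_comp
        (WeakDual.eval_continuous x).continuousAt hzclus
      exact h1
    have F1 : ∀ m, y m (f tstar) = 0 := by
      intro m
      have hclus2 : MapClusterPt (y m (f tstar)) atTop (fun n => y m (f (t n))) := by
        have h1 := MapClusterPt.continuousAt_comp
          ((hYdef (y m)).1 (P2 m).2).continuousAt htstar
        exact h1
      have hten : Tendsto (fun n => y m (f (t n))) atTop (𝓝 0) := by
        apply squeeze_zero_norm' ?_ tendsto_one_div_add_atTop_nhds_zero_nat
        filter_upwards [Filter.eventually_gt_atTop m] with n hn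
        simpa [Real.norm_eq_abs] using P4' m n hn
      exact st9_mapClusterPt_eq_of_tendsto hclus2 hten
    have F2 : z (f tstar) = 0 := by
      have hclus2 := hclz (f tstar)
      have hEq : (fun n => y n (f tstar)) = fun _ => (0:ℝ) := funext F1
      rw [hEq] at hclus2
      exact st9_mapClusterPt_eq_of_tendsto hclus2 tendsto_const_nhds
    have F3 : ∀ m, ε ≤ z (f (t m)) := by
      intro m
      refine st9_mapClusterPt_mem_closed (hclz (f (t m))) isClosed_Ici ?_
      filter_upwards [Filter.eventually_ge_atTop m] with n hn
      exact (P3 m n hn).le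
    have hzY' := hcl hzmem
    obtain ⟨yz, hyz, w', hw', hsum⟩ := Submodule.mem_sup.1 hzY'
    obtain ⟨a, ha⟩ := Submodule.mem_span_singleton.1 hw'
    have hzeq : z = yz + a • xinf := by rw [← hsum, ha]
    have hsmall : ∀ δ : ℝ, 0 < δ → |a| * ε ≤ 2 * δ := by
      intro δ hδ
      obtain ⟨tt, httmem, httx⟩ := hD
        (fun m => {u : T | |yz (f u)| < δ} ∩ {u : T | |(y m) (f u)| < δ})
        (fun m => (hopen1 yz hyz δ).inter (hopen1 (y m) (P2 m).2 δ))
        (Set.mem_iInter.2 fun m => ⟨hinfty1 yz δ hδ, hinfty1 (y m) δ hδ⟩)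
      have htt := Set.mem_iInter.1 httmem
      have h1 : |yz (f tt)| < δ := (htt 0).1
      have h2 : ∀ m, |y m (f tt)| < δ := fun m => (htt m).2
      have hzb : |z (f tt)| ≤ δ := by
        have hcl2 : IsClosed {r : ℝ | |r| ≤ δ} := isClosed_le continuous_abs continuous_const
        exact st9_mapClusterPt_mem_closed (hclz (f tt)) hcl2
          (Filter.Eventually.of_forall fun n => (h2 n).le)
      have hzval : z (f tt) = yz (f tt) + a * xinf (f tt) := by
        rw [hzeq, st9_wd_add_apply, st9_wd_smul_apply]
      have habs1 : |a| * ε ≤ |a| * xinf (f tt) :=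
        mul_le_mul_of_nonneg_left httx.le (abs_nonneg a)
      have habs2 : |a * xinf (f tt)| ≤ 2 * δ := by
        have hb1 := abs_le.1 hzb
        have hb2 := abs_lt.1 h1
        have hsub : a * xinf (f tt) = z (f tt) - yz (f tt) := by rw [hzval]; ring
        rw [hsub, abs_le]
        constructor <;> linarith
      have habs3 : |a| * xinf (f tt) ≤ |a * xinf (f tt)| := by
        rw [abs_mul]
        exact mul_le_mul_of_nonneg_left (le_abs_self _) (abs_nonneg a)
      linarith
    have ha0 : a = 0 := by
      by_contra hane
      have h1 : 0 < |a| * ε := mul_pos (abs_pos.2 hane) hε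
      have h2 := hsmall (|a| * ε / 4) (by positivity)
      linarith
    have hzY : z ∈ Y := by
      have hzy : z = yz := by rw [hzeq, ha0, zero_smul, add_zero]
      rw [hzy]; exact hyz
    have hfinal : ε ≤ z (f tstar) := by
      have hclus2 : MapClusterPt (z (f tstar)) atTop (fun n => z (f (t n))) := by
        have h1 := MapClusterPt.continuousAt_comp ((hYdef z).1 hzY).continuousAt htstar
        exact h1
      exact st9_mapClusterPt_mem_closed hclus2 isClosed_Ici
        (Filter.Eventually.of_forall fun m => F3 m)
    rw [F2] at hfinal
    linarith
  -- Part 2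
  have part2 : ∀ K : Set (WeakDual ℝ X), (∃ M : ℝ, ∀ y ∈ K, dnorm X y ≤ M) →
      K ⊆ ((Y ⊔ Submodule.span ℝ {xinf} : Submodule ℝ (WeakDual ℝ X)) :
            Set (WeakDual ℝ X)) →
      xinf ∈ closure (K ∩ (Y : Set (WeakDual ℝ X))) →
      ¬ (closure (K ∩ (Y : Set (WeakDual ℝ X))) ⊆
          ((Y ⊔ Submodule.span ℝ {xinf} : Submodule ℝ (WeakDual ℝ X)) :
            Set (WeakDual ℝ X))) ∧ ¬ IsCompact K := by
    rintro K ⟨M, hM⟩ hKsub hx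
    refine ⟨fun hcl => engine K M hM hx hcl, fun hcomp => ?_⟩
    exact engine K M hM hx
      ((closure_minimal Set.inter_subset_left hcomp.isClosed).trans hKsub)
  refine ⟨hxY, part2, ?_⟩
  -- Part 3
  intro hFMC
  have hξmem : xinf ∈ Y ⊔ Submodule.span ℝ {xinf} :=
    Submodule.mem_sup_right (Submodule.mem_span_singleton_self xinf)
  obtain ⟨g, hgker, hgξ⟩ := st9_exists_g (Y := Y) hxY
  have hMC : MackeyComplete X (Y ⊔ Submodule.span ℝ {xinf}) :=
    hFMC _ (st9_isNorming_sup hYn xinf) (st9_normClosed_sup hYc hxY)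
  have hgroth : GrothendieckCond X g := by
    intro K hKsub hKconv hKbal hKcomp
    by_contra hnc
    unfold ContinuousOn at hnc
    push_neg at hnc
    obtain ⟨φ₀, hφ₀s, hncw⟩ := hnc
    unfold ContinuousWithinAt at hncw
    rw [Metric.tendsto_nhds] at hncw
    push_neg at hncw
    obtain ⟨ε₀, hε₀, hfreq⟩ := hncw
    set s : Set ↥(Y ⊔ Submodule.span ℝ {xinf}) := Subtype.val ⁻¹' K with hsdef
    set S : Set ↥(Y ⊔ Submodule.span ℝ {xinf}) :=
      {v | ε₀ ≤ dist (g v) (g φ₀)} with hSdef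
    have hne : (𝓝[s ∩ S] φ₀).NeBot := by
      rw [nhdsWithin_inter']
      exact Filter.frequently_iff_neBot.1 hfreq
    have hdne : ∀ v ∈ S, g v - g φ₀ ≠ 0 ∧ ε₀ ≤ |g v - g φ₀| := by
      intro v hv
      have hd : ε₀ ≤ |g v - g φ₀| := by
        have h1 : ε₀ ≤ dist (g v) (g φ₀) := hv
        rwa [Real.dist_eq] at h1
      refine ⟨fun h0 => ?_, hd⟩
      rw [h0, abs_zero] at hd
      linarith
    set uu : ↥(Y ⊔ Submodule.span ℝ {xinf}) → WeakDual ℝ X := fun v =>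
      xinf - (g v - g φ₀)⁻¹ • ((v : WeakDual ℝ X) - (φ₀ : WeakDual ℝ X)) with huu
    set K2 : Set (WeakDual ℝ X) := (fun ψ => xinf + (2 / ε₀) • ψ) '' K with hK2
    have hK2comp : IsCompact K2 :=
      hKcomp.image (continuous_const.add (continuous_const_smul (2 / ε₀)))
    have hK2Y' : K2 ⊆ ((Y ⊔ Submodule.span ℝ {xinf} : Submodule ℝ (WeakDual ℝ X)) :
        Set (WeakDual ℝ X)) := by
      rintro _ ⟨ψ, hψ, rfl⟩
      exact Submodule.add_mem _ hξmem (Submodule.smul_mem _ _ (hKsub hψ))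
    obtain ⟨M2, hM2⟩ := st9_bound_of_compact hK2comp
    have hmemu : ∀ v ∈ s ∩ S, uu v ∈ K2 ∩ (Y : Set (WeakDual ℝ X)) := by
      intro v hv
      obtain ⟨hd0, hdge⟩ := hdne v hv.2
      constructor
      · have hvK : (v : WeakDual ℝ X) ∈ K := hv.1
        have hφ₀K : (φ₀ : WeakDual ℝ X) ∈ K := hφ₀s
        have hnegφ₀ : -(φ₀ : WeakDual ℝ X) ∈ K := by
          have hb := hKbal (-1) (by norm_num) (Set.smul_mem_smul_set hφ₀K)
          simpa using hb
        have hmid : (2⁻¹ : ℝ) • (v : WeakDual ℝ X) + (2⁻¹ : ℝ) • (-(φ₀ : WeakDual ℝ X)) ∈ K :=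
          hKconv hvK hnegφ₀ (by norm_num) (by norm_num) (by norm_num)
        have hscaled : ((-ε₀) / (g v - g φ₀)) •
            ((2⁻¹ : ℝ) • (v : WeakDual ℝ X) + (2⁻¹ : ℝ) • (-(φ₀ : WeakDual ℝ X))) ∈ K := by
          refine hKbal _ ?_ (Set.smul_mem_smul_set hmid)
          rw [Real.norm_eq_abs, abs_div, abs_neg, abs_of_pos hε₀,
            div_le_one (lt_of_lt_of_le hε₀ hdge)]
          exact hdge
        refine ⟨_, hscaled, ?_⟩
        rw [huu]
        match_scalars
        all_goals try ring
        all_goals try field_simp [hd0, hε₀.ne']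
        all_goals try ring
      · set vv : ↥(Y ⊔ Submodule.span ℝ {xinf}) :=
          ⟨xinf, hξmem⟩ - (g v - g φ₀)⁻¹ • (v - φ₀) with hvv
        have hcoe : (vv : WeakDual ℝ X) = uu v := by
          rw [hvv, huu]
          simp only [AddSubgroupClass.coe_sub, SetLike.val_smul]
        have hgvv : g vv = 0 := by
          rw [hvv, LinearMap.map_sub, LinearMap.map_smul, LinearMap.map_sub, hgξ hξmem, smul_eq_mul]
          field_simp
          ring
        have hYmem := (hgker vv).1 hgvv
        rwa [hcoe] at hYmem
    have hten : Tendsto uu (𝓝[s ∩ S] φ₀) (𝓝 xinf) := by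
      rw [tendsto_iff_forall_eval_tendsto_topDualPairing]
      intro x
      show Tendsto (fun v => uu v x) (𝓝[s ∩ S] φ₀) (𝓝 (xinf x))
      have heq : ∀ v, uu v x =
          xinf x - (g v - g φ₀)⁻¹ * ((v : WeakDual ℝ X) x - (φ₀ : WeakDual ℝ X) x) := by
        intro v
        rw [huu, st9_wd_sub_apply, st9_wd_smul_apply, st9_wd_sub_apply]
      rw [tendsto_congr heq]
      have hzero : Tendsto (fun v : ↥(Y ⊔ Submodule.span ℝ {xinf}) =>
          (g v - g φ₀)⁻¹ * ((v : WeakDual ℝ X) x - (φ₀ : WeakDual ℝ X) x))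
          (𝓝[s ∩ S] φ₀) (𝓝 0) := by
        have hvx : Tendsto (fun v : ↥(Y ⊔ Submodule.span ℝ {xinf}) =>
            (v : WeakDual ℝ X) x - (φ₀ : WeakDual ℝ X) x) (𝓝[s ∩ S] φ₀) (𝓝 0) := by
          have hc : Continuous fun v : ↥(Y ⊔ Submodule.span ℝ {xinf}) =>
              (v : WeakDual ℝ X) x - (φ₀ : WeakDual ℝ X) x :=
            ((WeakDual.eval_continuous x).comp continuous_subtype_val).sub continuous_const
          have := hc.continuousWithinAt (s := s ∩ S) (x := φ₀)
          simpa [ContinuousWithinAt, sub_self] using this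
        have hb : Tendsto (fun v : ↥(Y ⊔ Submodule.span ℝ {xinf}) =>
            ε₀⁻¹ * |(v : WeakDual ℝ X) x - (φ₀ : WeakDual ℝ X) x|)
            (𝓝[s ∩ S] φ₀) (𝓝 0) := by
          have h1 := hvx.abs
          rw [abs_zero] at h1
          have h2 := h1.const_mul ε₀⁻¹
          simpa using h2
        apply squeeze_zero_norm' ?_ hb
        filter_upwards [self_mem_nhdsWithin] with v hv
        obtain ⟨hd0, hdge⟩ := hdne v hv.2
        rw [Real.norm_eq_abs, abs_mul, abs_inv]
        apply mul_le_mul_of_nonneg_right ?_ (abs_nonneg _)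
        exact inv_anti₀ hε₀ hdge
      have hconst : Tendsto (fun _ : ↥(Y ⊔ Submodule.span ℝ {xinf}) => xinf x)
          (𝓝[s ∩ S] φ₀) (𝓝 (xinf x)) := tendsto_const_nhds
      have := hconst.sub hzero
      simpa using this
    have hxcl : xinf ∈ closure (K2 ∩ (Y : Set (WeakDual ℝ X))) := by
      exact mem_closure_of_tendsto hten
        (by filter_upwards [self_mem_nhdsWithin] with v hv; exact hmemu v hv)
    exact engine K2 M2 hM2 hxcl
      ((closure_minimal Set.inter_subset_left hK2comp.isClosed).trans hK2Y')
  have hcont : Continuous fun v : ↥(Y ⊔ Submodule.span ℝ {xinf}) => g v := hMC g hgroth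
  have hA : IsClosed {v : ↥(Y ⊔ Submodule.span ℝ {xinf}) | (v : WeakDual ℝ X) ∈ Y} := by
    have hset : {v : ↥(Y ⊔ Submodule.span ℝ {xinf}) | (v : WeakDual ℝ X) ∈ Y} =
        (fun v : ↥(Y ⊔ Submodule.span ℝ {xinf}) => g v) ⁻¹' {0} := by
      ext v
      simp only [Set.mem_setOf_eq, Set.mem_preimage, Set.mem_singleton_iff]
      exact (hgker v).symm
    rw [hset]
    exact IsClosed.preimage hcont isClosed_singleton
  have hdense : (⟨xinf, hξmem⟩ : ↥(Y ⊔ Submodule.span ℝ {xinf})) ∈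
      closure {v : ↥(Y ⊔ Submodule.span ℝ {xinf}) | (v : WeakDual ℝ X) ∈ Y} := by
    rw [closure_subtype]
    have himg : (Subtype.val ''
        {v : ↥(Y ⊔ Submodule.span ℝ {xinf}) | (v : WeakDual ℝ X) ∈ Y}) =
        (Y : Set (WeakDual ℝ X)) := by
      ext ψ
      constructor
      · rintro ⟨v, hv, rfl⟩; exact hv
      · intro hψ; exact ⟨⟨ψ, Submodule.mem_sup_left hψ⟩, hψ, rfl⟩
    rw [himg]
    exact st9_dense hYn xinf
  have hfin : xinf ∈ Y := by
    rw [hA.closure_eq] at hdense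
    exact hdense
  exact hxY hfin
end

section
/- The Banach space C([0, ω₁]) of continuous real-valued functions on the ordinal interval [0, ω₁] (where ω₁ is the first uncountable ordinal, and [0, ω₁] carries the order topology, making it a compact Hausdorff space) is not fully Mackey complete: there exist a norming and norm-closed subspace Y ⊆ C([0, ω₁])* and a linear functional f : Y → ℝ which is not w*-continuous but whose restriction to each absolutely convex w*-compact subset of Y is w*-continuous. -/
open Filter Topology

noncomputable instance : CompactSpace (Set.Iic (Cardinal.aleph 1).ord) :=
  isCompact_iff_compactSpace.mp (by rw [← Set.Icc_bot]; exact isCompact_Icc)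

/-! ### Auxiliary construction -/

namespace St12

open Set

attribute [local instance] Classical.propDecidable

set_option synthInstance.maxHeartbeats 1000000
set_option maxHeartbeats 1000000

noncomputable section

abbrev w1 : Ordinal := (Cardinal.aleph 1).ord
abbrev OT := ↥(Set.Iic w1)
abbrev XX := C(OT, ℝ)
abbrev DD := StrongDual ℝ XX
abbrev WD := WeakDual ℝ XX

lemma w1_isLimit : Order.IsSuccLimit w1 := Cardinal.isSuccLimit_ord (Cardinal.aleph0_le_aleph 1)

lemma w1_ne_zero : w1 ≠ 0 := by
  have := w1_isLimit.ne_bot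
  rwa [Ordinal.bot_eq_zero] at this

lemma succ_mem {c : Ordinal} (h : c < w1) : c + 1 ≤ w1 :=
  (Ordinal.add_one_eq_succ c ▸ (w1_isLimit.succ_lt h)).le

lemma lt_add_one_iff' {a b : Ordinal} : a < b + 1 ↔ a ≤ b := by
  rw [Ordinal.add_one_eq_succ, Order.lt_succ_iff]

/-- the top element `ω₁`. -/
abbrev tp : OT := (⊤ : OT)

lemma coe_tp : (tp : Ordinal) = w1 := rfl

lemma lt_top_iff_lt {c : OT} : c < tp ↔ c.1 < w1 := by
  constructor
  · intro h
    exact lt_of_le_of_ne c.2 (fun he => absurd (Subtype.ext he : c = tp) h.ne)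
  · intro h
    exact lt_of_le_of_ne le_top (fun he => absurd (congrArg Subtype.val he) h.ne)

/-- successor inside `OT` of an element `< ⊤`. -/
def sc (c : OT) (h : c < tp) : OT := ⟨c.1 + 1, succ_mem (lt_top_iff_lt.mp h)⟩

lemma lt_sc {c : OT} (h : c < tp) : c < sc c h := by
  show c.1 < c.1 + 1
  exact lt_add_one_iff'.mpr le_rfl

lemma le_of_lt_sc {c z : OT} (h : c < tp) (hz : z < sc c h) : z ≤ c := lt_add_one_iff'.mp hz

-- clopen Ioi
lemma isClopen_Ioi (c : OT) : IsClopen (Set.Ioi c) := by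
  constructor
  · rw [← isOpen_compl_iff, compl_Ioi]
    rcases lt_or_eq_of_le (show c.1 ≤ w1 from c.2) with h | h
    · have : Set.Iic c = Set.Iio (⟨c.1 + 1, succ_mem h⟩ : OT) := by
        ext z
        simp only [mem_Iic, mem_Iio, ← Subtype.coe_lt_coe, ← Subtype.coe_le_coe]
        exact lt_add_one_iff'.symm
      rw [this]; exact isOpen_Iio
    · have : Set.Iic c = Set.univ := by
        ext z; simp only [mem_Iic, mem_univ, iff_true, ← Subtype.coe_le_coe]
        exact le_trans z.2 h.ge
      rw [this]; exact isOpen_univ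
  · exact isOpen_Ioi

/-- indicator of `(c, ⊤]`. -/
def u (c : OT) : XX :=
  ⟨fun z => if c < z then 1 else 0, by
    apply Continuous.if _ continuous_const continuous_const
    intro a ha
    have h2 : frontier (Set.Ioi c) = ∅ := by rw [(isClopen_Ioi c).frontier_eq]
    have : a ∈ frontier (Set.Ioi c) := ha
    rw [h2] at this
    exact absurd this (Set.notMem_empty a)⟩

lemma u_apply (c z : OT) : u c z = if c < z then 1 else 0 := rfl

lemma u_norm_le (c : OT) : ‖u c‖ ≤ 1 := by
  rw [ContinuousMap.norm_le _ zero_le_one]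
  intro z
  rw [u_apply]
  split <;> simp

lemma u_sub_norm_le (c c' : OT) : ‖u c - u c'‖ ≤ 1 := by
  rw [ContinuousMap.norm_le _ zero_le_one]
  intro z
  simp only [ContinuousMap.sub_apply, u_apply]
  split <;> split <;> norm_num

/-- evaluation functional -/
def Dl (p : OT) : DD := ContinuousMap.evalCLM ℝ p

lemma Dl_apply (p : OT) (x : XX) : Dl p x = x p := rfl

lemma Dl_norm (p : OT) : ‖Dl p‖ ≤ 1 := by
  apply ContinuousLinearMap.opNorm_le_bound _ zero_le_one
  intro x
  simpa [Dl_apply] using (ContinuousMap.norm_coe_le_norm x p)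

/-- non-limit (i.e. isolated) points -/
def NL (p : OT) : Prop := p.1 = 0 ∨ ∃ q, p.1 = q + 1

lemma not_NL_top : ¬ NL tp := by
  rintro (h | ⟨q, hq⟩)
  · exact w1_ne_zero h
  · rw [coe_tp] at hq
    have hq' : q < w1 := by rw [hq]; exact lt_add_one_iff'.mpr le_rfl
    have h2 : q + 1 < w1 := by
      rw [Ordinal.add_one_eq_succ]; exact w1_isLimit.succ_lt hq'
    rw [← hq] at h2
    exact lt_irrefl _ h2

/-- predecessor of a successor element (junk otherwise). -/
def pr (p : OT) : OT :=
  if hs : ∃ q, p.1 = q + 1 then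
    ⟨hs.choose, by
      have h := hs.choose_spec
      have h2 : hs.choose < p.1 := by
        conv_rhs => rw [h]
        exact lt_add_one_iff'.mpr le_rfl
      exact le_trans h2.le p.2⟩
  else p

lemma pr_spec {p : OT} (hs : ∃ q, p.1 = q + 1) : (pr p).1 + 1 = p.1 := by
  rw [pr, dif_pos hs]
  exact hs.choose_spec.symm

/-- indicator of the singleton `{p}` for a non-limit `p` (junk otherwise). -/
def chi (p : OT) : XX :=
  if p.1 = 0 then (1 : XX) - u p else u (pr p) - u p

lemma chi_apply {p : OT} (hp : NL p) (z : OT) : chi p z = if z = p then 1 else 0 := by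
  rcases hp with h0 | hs
  · rw [chi, if_pos h0]
    show 1 - u p z = _
    rw [u_apply]
    rcases eq_or_ne z p with h | h
    · rw [if_pos h, if_neg (by rw [h]; exact lt_irrefl p)]; norm_num
    · have hz : p < z := by
        have : p.1 < z.1 := by
          rw [h0]
          exact pos_iff_ne_zero.mpr (fun hz0 => h (Subtype.ext (by rw [hz0, h0])))
        exact this
      rw [if_neg h, if_pos hz]; norm_num
  · rw [chi, if_neg (by rw [← pr_spec hs]; exact fun hc => (Ordinal.succ_ne_zero _) ((Ordinal.add_one_eq_succ _) ▸ hc))]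
    show u (pr p) z - u p z = _
    rw [u_apply, u_apply]
    have hpr : (pr p).1 < p.1 := by rw [← pr_spec hs]; exact lt_add_one_iff'.mpr le_rfl
    rcases lt_trichotomy z p with h | h | h
    · have h1 : ¬ p < z := (lt_asymm h)
      have h2 : ¬ (pr p) < z := by
        intro hc
        have : z.1 ≤ (pr p).1 := by
          have hzp : z.1 < (pr p).1 + 1 := by rw [pr_spec hs]; exact h
          exact lt_add_one_iff'.mp hzp
        exact absurd (show (pr p).1 < z.1 from hc) (not_lt.mpr this)
      rw [if_neg h1, if_neg h2, if_neg h.ne]; norm_num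
    · have hprz : pr p < z := by
        rw [h]; exact hpr
      have hnpz : ¬ p < z := by rw [h]; exact lt_irrefl p
      rw [if_pos hprz, if_neg hnpz, if_pos h]
      norm_num
    · rw [if_pos (lt_trans (show pr p < p from hpr) h), if_pos h, if_neg h.ne']
      norm_num

lemma chi_norm_le {p : OT} (hp : NL p) : ‖chi p‖ ≤ 1 := by
  rw [ContinuousMap.norm_le _ zero_le_one]
  intro z
  rw [chi_apply hp]
  split <;> simp

/-- generators: evaluations at non-limit points and at the top. -/
def G : Set DD := Dl '' {p | NL p ∨ p = tp}

/-- the span of the generators. -/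
def Y0 : Submodule ℝ DD := Submodule.span ℝ G

/-- norm closure of the span. -/
def Z : Submodule ℝ DD := Y0.topologicalClosure

/-- `Y` as a submodule of the weak dual. -/
def Y : Submodule ℝ WD := Z.comap (WeakDual.toStrongDual.toLinearMap)

lemma mem_Y_iff (y : WD) : y ∈ Y ↔ WeakDual.toStrongDual y ∈ Z := Iff.rfl

lemma Dl_mem_Z {p : OT} (hp : NL p ∨ p = tp) : Dl p ∈ Z :=
  Y0.le_topologicalClosure (Submodule.subset_span ⟨p, hp, rfl⟩)

/-- sums of distinct-singleton indicators with coefficients in `[-1,1]` have norm at most 1 -/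
lemma sumchi_norm (F : Finset OT) (hF : ∀ p ∈ F, NL p) (s : OT → ℝ) (hs : ∀ p, |s p| ≤ 1) :
    ‖∑ p ∈ F, s p • chi p‖ ≤ 1 := by
  rw [ContinuousMap.norm_le _ zero_le_one]
  intro z
  have h1 : (∑ p ∈ F, s p • chi p) z = ∑ p ∈ F, s p * chi p z := by simp
  rw [h1]
  have h2 : ∀ p ∈ F, s p * chi p z = if p = z then s p else 0 := by
    intro p hp
    rw [chi_apply (hF p hp) z]
    rcases eq_or_ne p z with h | h
    · rw [if_pos h, if_pos h.symm]; ring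
    · rw [if_neg h, if_neg h.symm]; ring
  rw [Finset.sum_congr rfl h2, Finset.sum_ite_eq' F z s]
  split
  · calc ‖s z‖ = |s z| := rfl
      _ ≤ 1 := hs z
  · norm_num

lemma atom_sum_le (μ : DD) (F : Finset OT) (hF : ∀ p ∈ F, NL p) :
    ∑ p ∈ F, |μ (chi p)| ≤ ‖μ‖ := by
  set s : OT → ℝ := fun p => if μ (chi p) < 0 then -1 else 1 with hs_def
  have habs : ∀ p, |s p| ≤ 1 := by
    intro p; rw [hs_def]; dsimp only; split <;> norm_num
  have h1 : ∀ p, |μ (chi p)| = s p * μ (chi p) := by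
    intro p; rw [hs_def]; dsimp only
    split
    · rw [abs_of_neg (by assumption)]; ring
    · rw [abs_of_nonneg (le_of_not_gt (by assumption))]; ring
  calc ∑ p ∈ F, |μ (chi p)| = ∑ p ∈ F, μ (s p • chi p) := by
        refine Finset.sum_congr rfl (fun p _ => ?_)
        rw [h1 p, map_smul, smul_eq_mul]
      _ = μ (∑ p ∈ F, s p • chi p) := (map_sum μ _ F).symm
      _ ≤ |μ (∑ p ∈ F, s p • chi p)| := le_abs_self _
      _ ≤ ‖μ‖ * ‖∑ p ∈ F, s p • chi p‖ := μ.le_opNorm _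
      _ ≤ ‖μ‖ * 1 := by
        exact mul_le_mul_of_nonneg_left (sumchi_norm F hF s habs) (norm_nonneg μ)
      _ = ‖μ‖ := mul_one _

/-- the (isolated-point) support of a functional. -/
def suppJ (μ : DD) : Set OT := {p | NL p ∧ μ (chi p) ≠ 0}

lemma suppJ_countable (μ : DD) : (suppJ μ).Countable := by
  have hsub : suppJ μ ⊆ ⋃ n : ℕ, {p : OT | NL p ∧ 1/(n+1 : ℝ) ≤ |μ (chi p)|} := by
    rintro p ⟨hNL, hne⟩
    have : 0 < |μ (chi p)| := abs_pos.mpr hne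
    obtain ⟨n, hn⟩ := exists_nat_one_div_lt this
    exact Set.mem_iUnion.mpr ⟨n, hNL, hn.le⟩
  refine Set.Countable.mono hsub (Set.countable_iUnion (fun n => Set.Finite.countable ?_))
  by_contra hinf
  rw [← Set.not_infinite, not_not] at hinf
  obtain ⟨t, ht, hcard⟩ := Set.Infinite.exists_subset_card_eq hinf (⌊‖μ‖ * (n+1)⌋₊ + 1)
  have hle : ∑ p ∈ t, |μ (chi p)| ≤ ‖μ‖ := atom_sum_le μ t (fun p hp => (ht hp).1)
  have hge : (t.card : ℝ) * (1/(n+1 : ℝ)) ≤ ∑ p ∈ t, |μ (chi p)| := by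
    rw [Finset.card_eq_sum_ones t, Nat.cast_sum]
    rw [Finset.sum_mul]
    refine Finset.sum_le_sum (fun p hp => ?_)
    simpa using (ht hp).2
  have hcard' : (⌊‖μ‖ * (n+1)⌋₊ + 1 : ℝ) * (1/(n+1 : ℝ)) ≤ ‖μ‖ := by
    rw [hcard] at hge
    calc (⌊‖μ‖ * (n+1)⌋₊ + 1 : ℝ) * (1/(n+1 : ℝ))
        = ((⌊‖μ‖ * (n+1)⌋₊ + 1 : ℕ) : ℝ) * (1/(n+1 : ℝ)) := by push_cast; ring
      _ ≤ ∑ p ∈ t, |μ (chi p)| := hge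
      _ ≤ ‖μ‖ := hle
  have hlt : ‖μ‖ * (n+1) < (⌊‖μ‖ * (n+1)⌋₊ + 1 : ℝ) := Nat.lt_floor_add_one _
  have hpos : (0:ℝ) < n + 1 := by positivity
  have h5 := mul_le_mul_of_nonneg_right hcard' hpos.le
  rw [mul_assoc, one_div, inv_mul_cancel₀ hpos.ne', mul_one] at h5
  linarith

/-- structure of span elements -/
lemma span_structure (ν : DD) (hν : ν ∈ Y0) :
    ∃ D : Finset OT, (∀ p ∈ D, NL p) ∧ (∀ p, NL p → p ∉ D → ν (chi p) = 0) ∧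
      (∀ c c' : OT, c ≤ c' → c' < tp →
        ν (u c) - ν (u c') = ∑ p ∈ D, (if c < p ∧ p ≤ c' then ν (chi p) else 0)) := by
  induction hν using Submodule.span_induction with
  | mem x hx =>
    obtain ⟨p, hp, rfl⟩ := hx
    rcases hp with hNL | htop
    · refine ⟨{p}, by simpa using hNL, ?_, ?_⟩
      · intro q hq hqp
        rw [Dl_apply, chi_apply hq]
        rw [if_neg]
        intro hc
        exact hqp (by simpa using hc.symm)
      · intro c c' hcc hc'
        rw [Finset.sum_singleton, Dl_apply, Dl_apply, Dl_apply, u_apply, u_apply,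
          chi_apply hNL, if_pos rfl]
        rcases lt_or_ge c p with h1 | h1
        · rcases le_or_gt p c' with h2 | h2
          · rw [if_pos h1, if_neg (not_lt.mpr h2), if_pos ⟨h1, h2⟩]; norm_num
          · rw [if_pos h1, if_pos h2, if_neg (fun hc => absurd hc.2 (not_le.mpr h2))]
            norm_num
        · rw [if_neg (not_lt.mpr h1), if_neg (not_lt.mpr (le_trans h1 hcc)),
            if_neg (fun hc => absurd hc.1 (not_lt.mpr h1))]
          norm_num
    · subst htop
      refine ⟨∅, by simp, ?_, ?_⟩
      · intro q hq _
        rw [Dl_apply, chi_apply hq, if_neg]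
        intro hc
        exact not_NL_top (hc ▸ hq)
      · intro c c' hcc hc'
        rw [Finset.sum_empty, Dl_apply, Dl_apply, u_apply, u_apply,
          if_pos (lt_of_le_of_lt hcc hc'), if_pos hc']
        norm_num
  | zero => exact ⟨∅, by simp, by simp, by simp⟩
  | add x y hx hy ihx ihy =>
    obtain ⟨D1, hD1, hz1, hint1⟩ := ihx
    obtain ⟨D2, hD2, hz2, hint2⟩ := ihy
    refine ⟨D1 ∪ D2, ?_, ?_, ?_⟩
    · intro p hp; rcases Finset.mem_union.mp hp with h | h
      · exact hD1 p h
      · exact hD2 p h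
    · intro p hp hpD
      have h1 := hz1 p hp (fun hc => hpD (Finset.mem_union_left _ hc))
      have h2 := hz2 p hp (fun hc => hpD (Finset.mem_union_right _ hc))
      simp [h1, h2]
    · intro c c' hcc hc'
      have e1 : ∑ p ∈ D1 ∪ D2, (if c < p ∧ p ≤ c' then x (chi p) else 0)
          = ∑ p ∈ D1, (if c < p ∧ p ≤ c' then x (chi p) else 0) := by
        refine (Finset.sum_subset Finset.subset_union_left ?_).symm
        intro p hp hpD1
        rw [hz1 p ((Finset.mem_union.mp hp).resolve_left hpD1 |> hD2 p) hpD1]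
        simp
      have e2 : ∑ p ∈ D1 ∪ D2, (if c < p ∧ p ≤ c' then y (chi p) else 0)
          = ∑ p ∈ D2, (if c < p ∧ p ≤ c' then y (chi p) else 0) := by
        refine (Finset.sum_subset Finset.subset_union_right ?_).symm
        intro p hp hpD2
        rw [hz2 p ((Finset.mem_union.mp hp).resolve_right hpD2 |> hD1 p) hpD2]
        simp
      have : ∀ p : OT, (if c < p ∧ p ≤ c' then (x + y) (chi p) else 0)
          = (if c < p ∧ p ≤ c' then x (chi p) else 0) + (if c < p ∧ p ≤ c' then y (chi p) else 0) := by
        intro p; split <;> simp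
      rw [Finset.sum_congr rfl (fun p _ => this p), Finset.sum_add_distrib, e1, e2]
      have := hint1 c c' hcc hc'
      have := hint2 c c' hcc hc'
      simp only [ContinuousLinearMap.add_apply]
      linarith
  | smul a x hx ihx =>
    obtain ⟨D, hD, hz, hint⟩ := ihx
    refine ⟨D, hD, ?_, ?_⟩
    · intro p hp hpD
      simp [hz p hp hpD]
    · intro c c' hcc hc'
      have : ∀ p : OT, (if c < p ∧ p ≤ c' then (a • x) (chi p) else 0)
          = a * (if c < p ∧ p ≤ c' then x (chi p) else 0) := by
        intro p; split <;> simp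
      rw [Finset.sum_congr rfl (fun p _ => this p), ← Finset.mul_sum]
      have h6 := hint c c' hcc hc'
      simp only [ContinuousLinearMap.smul_apply, smul_eq_mul]
      linear_combination a * h6

/-- atoms vanishing on an interval force the interval mass to vanish, for `μ ∈ Z`. -/
lemma mem_Z_approx (μ : DD) (hμ : μ ∈ Z) {ε : ℝ} (hε : 0 < ε) :
    ∃ ν ∈ Y0, ‖μ - ν‖ < ε := by
  have h1 : μ ∈ closure (Y0 : Set DD) := by
    rw [← Submodule.topologicalClosure_coe]
    exact hμ
  replace h1 : μ ∈ @closure DD PseudoMetricSpace.toUniformSpace.toTopologicalSpace Y0 := h1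
  rw [Metric.mem_closure_iff] at h1
  obtain ⟨ν, hν, hd⟩ := h1 ε hε
  exact ⟨ν, hν, by rw [← @dist_eq_norm DD _]; exact hd⟩

lemma interval_of_atoms (μ : DD) (hμ : μ ∈ Z) {c c' : OT} (hcc : c ≤ c') (hc' : c' < tp)
    (h : ∀ p, NL p → c < p → p ≤ c' → μ (chi p) = 0) : μ (u c) = μ (u c') := by
  have key : ∀ ε : ℝ, 0 < ε → |μ (u c) - μ (u c')| ≤ 2 * ε := by
    intro ε hε
    obtain ⟨ν, hν, hd⟩ := mem_Z_approx μ hμ hε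
    obtain ⟨D, hD, hz, hint⟩ := span_structure ν hν
    set s : OT → ℝ := fun p => if c < p ∧ p ≤ c' then 1 else 0 with hs_def
    have habs : ∀ p, |s p| ≤ 1 := by
      intro p; rw [hs_def]; dsimp only; split <;> norm_num
    -- the interval mass of ν equals (ν - μ) applied to a sum of singleton indicators
    have e1 : ν (u c) - ν (u c') = (ν - μ) (∑ p ∈ D, s p • chi p) := by
      rw [hint c c' hcc hc', map_sum]
      refine Finset.sum_congr rfl (fun p hp => ?_)
      rw [hs_def]; dsimp only
      split
      · rename_i hcond
        rw [one_smul, ContinuousLinearMap.sub_apply, h p (hD p hp) hcond.1 hcond.2, sub_zero]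
      · rw [zero_smul, map_zero]
    have e2 : |ν (u c) - ν (u c')| ≤ ε := by
      rw [e1]
      calc |(ν - μ) (∑ p ∈ D, s p • chi p)|
          ≤ ‖ν - μ‖ * ‖∑ p ∈ D, s p • chi p‖ := (ν - μ).le_opNorm _
        _ ≤ ε * 1 := by
            refine mul_le_mul ?_ (sumchi_norm D hD s habs) (norm_nonneg _) hε.le
            rw [← neg_sub, @norm_neg DD _]; exact hd.le
        _ = ε := mul_one _
    have e3 : |(μ - ν) (u c - u c')| ≤ ε := by
      calc |(μ - ν) (u c - u c')| ≤ ‖μ - ν‖ * ‖u c - u c'‖ := (μ - ν).le_opNorm _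
        _ ≤ ε * 1 := mul_le_mul hd.le (u_sub_norm_le c c') (norm_nonneg _) hε.le
        _ = ε := mul_one _
    have e4 : μ (u c) - μ (u c') = (μ - ν) (u c - u c') + (ν (u c) - ν (u c')) := by
      simp only [ContinuousLinearMap.sub_apply, map_sub]
      ring
    rw [e4]
    calc |(μ - ν) (u c - u c') + (ν (u c) - ν (u c'))|
        ≤ |(μ - ν) (u c - u c')| + |ν (u c) - ν (u c')| := abs_add_le _ _
      _ ≤ ε + ε := add_le_add e3 e2
      _ = 2 * ε := by ring
  have : |μ (u c) - μ (u c')| ≤ 0 := by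
    by_contra hcon
    push_neg at hcon
    have := key (|μ (u c) - μ (u c')| / 4) (by linarith)
    linarith
  have := abs_nonneg (μ (u c) - μ (u c'))
  have h0 : |μ (u c) - μ (u c')| = 0 := le_antisymm ‹_› ‹_›
  linarith [abs_eq_zero.mp h0, sub_eq_zero.mp (abs_eq_zero.mp h0)]

/-- each element of `Z` has a support bound below `ω₁`. -/
lemma evbd_span (ν : DD) (hν : ν ∈ Y0) :
    ∃ β : OT, β < tp ∧ ∀ c, β ≤ c → c < tp → ν (u c) = ν (u β) := by
  induction hν using Submodule.span_induction with
  | mem x hx =>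
    obtain ⟨p, hp, rfl⟩ := hx
    rcases hp with hNL | htop
    · have hptop : p < tp := lt_of_le_of_ne le_top (fun hc => not_NL_top (hc ▸ hNL))
      refine ⟨p, hptop, fun c hc _ => ?_⟩
      rw [Dl_apply, Dl_apply, u_apply, u_apply, if_neg (not_lt.mpr hc), if_neg (lt_irrefl p)]
    · subst htop
      refine ⟨⊥, ?_, fun c _ hc => ?_⟩
      · refine lt_of_le_of_ne bot_le (fun hc => ?_)
        have : (0 : Ordinal) = w1 := congrArg Subtype.val hc
        exact w1_ne_zero this.symm
      · rw [Dl_apply, Dl_apply, u_apply, u_apply, if_pos hc, if_pos]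
        exact lt_of_le_of_ne le_top (fun hb => w1_ne_zero ((congrArg Subtype.val hb).symm ▸ rfl : (⊥ : OT).1 = w1).symm)
  | zero => exact ⟨⊥, lt_of_le_of_ne bot_le (fun hc => w1_ne_zero (congrArg Subtype.val hc).symm), by simp⟩
  | add x y hx hy ihx ihy =>
    obtain ⟨b1, hb1, h1⟩ := ihx
    obtain ⟨b2, hb2, h2⟩ := ihy
    refine ⟨max b1 b2, max_lt hb1 hb2, fun c hc hctop => ?_⟩
    have e1 := h1 c (le_trans (le_max_left _ _) hc) hctop
    have e2 := h2 c (le_trans (le_max_right _ _) hc) hctop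
    have e3 := h1 (max b1 b2) (le_max_left _ _) (max_lt hb1 hb2)
    have e4 := h2 (max b1 b2) (le_max_right _ _) (max_lt hb1 hb2)
    simp only [ContinuousLinearMap.add_apply]
    rw [e1, e2, e3, e4]
  | smul a x hx ihx =>
    obtain ⟨b, hb, h1⟩ := ihx
    refine ⟨b, hb, fun c hc hctop => ?_⟩
    simp only [ContinuousLinearMap.smul_apply, smul_eq_mul]
    rw [h1 c hc hctop]

lemma evbd (μ : DD) (hμ : μ ∈ Z) :
    ∃ β : OT, β < tp ∧ ∀ c, β ≤ c → c < tp → μ (u c) = μ (u β) := by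
  have h1 : μ ∈ closure (Y0 : Set DD) := by
    rw [← Submodule.topologicalClosure_coe]; exact hμ
  replace h1 : μ ∈ @closure DD PseudoMetricSpace.toUniformSpace.toTopologicalSpace Y0 := h1
  rw [mem_closure_iff_seq_limit] at h1
  obtain ⟨v, hv, hlim⟩ := h1
  choose βf hβf hspec using (fun n => evbd_span (v n) (hv n))
  have hsup : iSup (fun n => (βf n).1) < w1 := by
    have := Ordinal.iSup_lt_omega_one (f := fun n => (βf n).1)
      (fun n => by rw [← Cardinal.ord_aleph]; exact lt_top_iff_lt.mp (hβf n))
    rwa [← Cardinal.ord_aleph] at this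
  set β : OT := ⟨iSup (fun n => (βf n).1), hsup.le⟩ with hβdef
  have hβtop : β < tp := lt_top_iff_lt.mpr hsup
  have hβge : ∀ n, βf n ≤ β := by
    intro n
    show (βf n).1 ≤ iSup (fun n => (βf n).1)
    exact le_ciSup (Ordinal.bddAbove_range _) n
  refine ⟨β, hβtop, fun c hc hctop => ?_⟩
  have key : ∀ n, μ (u c) - μ (u β) = (μ - v n) (u c) - (μ - v n) (u β) := by
    intro n
    have e1 : v n (u c) = v n (u (βf n)) := hspec n c (le_trans (hβge n) hc) hctop
    have e2 : v n (u β) = v n (u (βf n)) := hspec n β (hβge n) hβtop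
    simp only [ContinuousLinearMap.sub_apply]
    rw [e1, e2]
    ring
  have hbound : ∀ n, |μ (u c) - μ (u β)| ≤ 2 * ‖μ - v n‖ := by
    intro n
    rw [key n]
    calc |(μ - v n) (u c) - (μ - v n) (u β)|
        ≤ |(μ - v n) (u c)| + |(μ - v n) (u β)| := abs_sub _ _
      _ ≤ ‖μ - v n‖ * ‖u c‖ + ‖μ - v n‖ * ‖u β‖ := add_le_add ((μ - v n).le_opNorm _) ((μ - v n).le_opNorm _)
      _ ≤ ‖μ - v n‖ * 1 + ‖μ - v n‖ * 1 := by
          refine add_le_add ?_ ?_ <;>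
            exact mul_le_mul_of_nonneg_left (u_norm_le _) (@norm_nonneg DD _ _)
      _ = 2 * ‖μ - v n‖ := by ring
  have hnorm : Tendsto (fun n => ‖μ - v n‖) atTop (𝓝 0) := by
    have := tendsto_iff_dist_tendsto_zero.mp hlim
    refine this.congr (fun n => ?_)
    rw [dist_comm]
    exact @dist_eq_norm DD _ μ (v n)
  have hle : |μ (u c) - μ (u β)| ≤ 0 := by
    have h2 : Tendsto (fun n => 2 * ‖μ - v n‖) atTop (𝓝 (2 * 0)) := hnorm.const_mul 2
    rw [mul_zero] at h2
    exact ge_of_tendsto h2 (Filter.Eventually.of_forall hbound)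
  have h0 : |μ (u c) - μ (u β)| = 0 := le_antisymm hle (abs_nonneg _)
  exact sub_eq_zero.mp (abs_eq_zero.mp h0)

/-- choice of a support bound. -/
def BB (μ : DD) : OT :=
  if h : ∃ β : OT, β < tp ∧ ∀ c, β ≤ c → c < tp → μ (u c) = μ (u β) then h.choose else ⊥

lemma BB_spec (μ : DD) (hμ : μ ∈ Z) :
    BB μ < tp ∧ ∀ c, BB μ ≤ c → c < tp → μ (u c) = μ (u (BB μ)) := by
  rw [BB, dif_pos (evbd μ hμ)]
  exact (evbd μ hμ).choose_spec

/-- the functional: total mass minus the mass at `ω₁`. -/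
def FF (μ : DD) : ℝ := μ 1 - μ (u (BB μ))

lemma FF_eval (μ : DD) (hμ : μ ∈ Z) {c : OT} (hc : BB μ ≤ c) (hc2 : c < tp) :
    FF μ = μ 1 - μ (u c) := by
  rw [FF, (BB_spec μ hμ).2 c hc hc2]

lemma FF_add (μ ν : DD) (hμ : μ ∈ Z) (hν : ν ∈ Z) : FF (μ + ν) = FF μ + FF ν := by
  have hsum : μ + ν ∈ Z := Z.add_mem hμ hν
  set c : OT := max (max (BB (μ + ν)) (BB μ)) (BB ν) with hc
  have hctop : c < tp := max_lt (max_lt (BB_spec _ hsum).1 (BB_spec _ hμ).1) (BB_spec _ hν).1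
  rw [FF_eval _ hsum (le_trans (le_max_left _ _) (le_max_left _ _)) hctop,
    FF_eval _ hμ (le_trans (le_max_right _ _) (le_max_left _ _)) hctop,
    FF_eval _ hν (le_max_right _ _) hctop]
  simp only [ContinuousLinearMap.add_apply]
  ring

lemma FF_smul (a : ℝ) (μ : DD) (hμ : μ ∈ Z) : FF (a • μ) = a * FF μ := by
  have hsm : a • μ ∈ Z := Z.smul_mem a hμ
  set c : OT := max (BB (a • μ)) (BB μ) with hc
  have hctop : c < tp := max_lt (BB_spec _ hsm).1 (BB_spec _ hμ).1
  rw [FF_eval _ hsm (le_max_left _ _) hctop, FF_eval _ hμ (le_max_right _ _) hctop]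
  simp only [ContinuousLinearMap.smul_apply, smul_eq_mul]
  ring

lemma FF_Dl_NL {p : OT} (hp : NL p) : FF (Dl p) = 1 := by
  have hmem : Dl p ∈ Z := Dl_mem_Z (Or.inl hp)
  have hptop : p < tp := lt_of_le_of_ne le_top (fun hc => not_NL_top (hc ▸ hp))
  set c : OT := max (BB (Dl p)) p with hc
  have hctop : c < tp := max_lt (BB_spec _ hmem).1 hptop
  rw [FF_eval _ hmem (le_max_left _ _) hctop, Dl_apply, Dl_apply, u_apply,
    if_neg (not_lt.mpr (le_max_right _ _))]
  simp

lemma FF_Dl_top : FF (Dl tp) = 0 := by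
  have hmem : Dl tp ∈ Z := Dl_mem_Z (Or.inr rfl)
  rw [FF, Dl_apply, Dl_apply, u_apply, if_pos (BB_spec _ hmem).1]
  simp

/-- `GG`, the functional on the weak dual -/
def GG (μ : WD) : ℝ := FF (WeakDual.toStrongDual μ)

/-- the linear functional `f` on `Y`. -/
def fY : Y →ₗ[ℝ] ℝ where
  toFun y := GG y.1
  map_add' y z := FF_add _ _ y.2 z.2
  map_smul' a y := FF_smul a _ y.2

/-- `Y` as a weak-dual submodule is norm closed. -/
lemma normClosed_Y : NormClosed XX Y := by
  show IsClosed _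
  have himg : (fun y : WD => WeakDual.toStrongDual y) '' (Y : Set WD) = (Z : Set DD) := by
    ext μ
    constructor
    · rintro ⟨y, hy, rfl⟩; exact hy
    · intro hμ
      exact ⟨StrongDual.toWeakDual μ, hμ, rfl⟩
  rw [himg]
  exact Submodule.isClosed_topologicalClosure _

/-- the weak-dual versions of the evaluation functionals -/
def DW (p : OT) : WD := StrongDual.toWeakDual (Dl p)

lemma DW_apply (p : OT) (x : XX) : DW p x = x p := rfl

lemma DW_mem_Y {p : OT} (hp : NL p ∨ p = tp) : DW p ∈ Y := Dl_mem_Z hp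

lemma dnorm_DW (p : OT) : dnorm XX (DW p) ≤ 1 := Dl_norm p

lemma dnorm_neg_DW (p : OT) : dnorm XX (-DW p) ≤ 1 := by
  show ‖WeakDual.toStrongDual (-DW p)‖ ≤ 1
  rw [map_neg, @norm_neg DD _]
  exact Dl_norm p

/-- nearby non-limit points: every neighbourhood of any point contains a non-limit point
at which `x` is close in value -/
lemma exists_NL_near (x : XX) (w : OT) {ε : ℝ} (hε : 0 < ε) :
    ∃ i : OT, NL i ∧ |x i - x w| < ε := by
  rcases Classical.em (NL w) with hw | hw
  · exact ⟨w, hw, by simpa using hε⟩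
  · -- w is a limit point, in particular ⊥ < w
    have hwbot : (⊥ : OT) < w := by
      rcases eq_or_ne w ⊥ with h | h
      · exact absurd (Or.inl (by rw [h]; exact congrArg Subtype.val (rfl : (⊥:OT) = ⊥) |>.trans Ordinal.bot_eq_zero)) hw
      · exact lt_of_le_of_ne bot_le (Ne.symm h)
    have hcont : ContinuousAt x w := x.continuous.continuousAt
    have hball : x ⁻¹' Metric.ball (x w) ε ∈ 𝓝 w := hcont (Metric.ball_mem_nhds _ hε)
    obtain ⟨l, hl, hsub⟩ := exists_Ioc_subset_of_mem_nhds' hball hwbot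
    have hlw : l < w := hl.2
    have hltp : l < tp := lt_of_lt_of_le hlw le_top
    have hmem : sc l hltp ∈ Set.Ioc l w := by
      constructor
      · exact lt_sc hltp
      · show (sc l hltp).1 ≤ w.1
        show l.1 + 1 ≤ w.1
        rw [Ordinal.add_one_eq_succ, Order.succ_le_iff]
        exact hlw
    have := hsub hmem
    rw [Set.mem_preimage, Metric.mem_ball, Real.dist_eq] at this
    exact ⟨sc l hltp, Or.inr ⟨l.1, rfl⟩, this⟩

lemma bot_lt_tp : (⊥ : OT) < tp := by
  refine lt_of_le_of_ne bot_le (fun hc => ?_)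
  have : (0 : Ordinal) = w1 := congrArg Subtype.val hc
  exact w1_ne_zero this.symm

lemma NL_sc (c : OT) (h : c < tp) : NL (sc c h) := Or.inr ⟨c.1, rfl⟩

lemma toD_DW (p : OT) : WeakDual.toStrongDual (DW p) = Dl p :=
  StrongDual.toWeakDual.symm_apply_apply (Dl p)

lemma isNorming_Y : IsNorming XX Y := by
  refine ⟨1, one_pos, fun x => ?_⟩
  rw [one_mul]
  set R := {r : ℝ | ∃ y ∈ Y, dnorm XX y ≤ 1 ∧ r = y x} with hR
  have hbdd : BddAbove R := by
    refine ⟨‖x‖, fun r hr => ?_⟩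
    obtain ⟨y, _, hy1, rfl⟩ := hr
    calc y x ≤ |y x| := le_abs_self _
      _ = ‖(WeakDual.toStrongDual y) x‖ := rfl
      _ ≤ ‖WeakDual.toStrongDual y‖ * ‖x‖ := (WeakDual.toStrongDual y).le_opNorm x
      _ ≤ 1 * ‖x‖ := mul_le_mul_of_nonneg_right hy1 (norm_nonneg x)
      _ = ‖x‖ := one_mul _
  have hmemR : ∀ i : OT, NL i → |x i| ∈ R := by
    intro i hi
    rcases le_or_gt 0 (x i) with h | h
    · exact ⟨DW i, DW_mem_Y (Or.inl hi), dnorm_DW i, by rw [abs_of_nonneg h]; rfl⟩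
    · refine ⟨-DW i, Y.neg_mem (DW_mem_Y (Or.inl hi)), dnorm_neg_DW i, ?_⟩
      rw [abs_of_neg h]
      show -(x i) = -(DW i x)
      rw [DW_apply]
  -- ∀ ε > 0, ‖x‖ - ε ≤ sSup R
  have key : ∀ ε : ℝ, 0 < ε → ‖x‖ - ε ≤ sSup R := by
    intro ε hε
    rcases le_or_gt ‖x‖ ε with h | h
    · have h0 : (0:ℝ) ∈ R := ⟨0, Y.zero_mem, by
        show ‖WeakDual.toStrongDual (0 : WD)‖ ≤ 1
        rw [map_zero, @norm_zero DD _]; exact zero_le_one, rfl⟩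
      calc ‖x‖ - ε ≤ 0 := by linarith
        _ ≤ sSup R := le_csSup hbdd h0
    · -- find a point where |x| is large
      have hnot : ¬ (∀ w : OT, |x w| ≤ ‖x‖ - ε/2) := by
        intro hall
        have : ‖x‖ ≤ ‖x‖ - ε/2 := by
          rw [ContinuousMap.norm_le _ (by linarith)]
          intro w; exact hall w
        linarith
      push_neg at hnot
      obtain ⟨w, hw⟩ := hnot
      obtain ⟨i, hiNL, hnear⟩ := exists_NL_near x w (by linarith : (0:ℝ) < ε/2)
      have hxi : ‖x‖ - ε < |x i| := by
        have h1 : |x w| - |x i| ≤ |x i - x w| := by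
          rw [abs_sub_comm]
          exact abs_sub_abs_le_abs_sub _ _
        linarith
      calc ‖x‖ - ε ≤ |x i| := hxi.le
        _ ≤ sSup R := le_csSup hbdd (hmemR i hiNL)
  by_contra hcon
  push_neg at hcon
  have := key ((‖x‖ - sSup R)/2) (by linarith)
  linarith

lemma u_mul (c c' : OT) : u c * u c' = u (max c c') := by
  ext z
  show (if c < z then (1:ℝ) else 0) * (if c' < z then 1 else 0) = if max c c' < z then 1 else 0
  rcases le_or_gt z (max c c') with h | h
  · rw [if_neg (not_lt.mpr h)]
    rcases max_cases c c' with ⟨he, _⟩ | ⟨he, _⟩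
    · rw [he] at h
      rw [if_neg (not_lt.mpr h), zero_mul]
    · rw [he] at h
      rw [if_neg (not_lt.mpr h), mul_zero]
  · rw [if_pos h, if_pos (lt_of_le_of_lt (le_max_left c c') h),
      if_pos (lt_of_le_of_lt (le_max_right c c') h), one_mul]

lemma u_top_eq_zero : u tp = 0 := by
  ext z
  show (if tp < z then (1:ℝ) else 0) = 0
  rw [if_neg (not_lt.mpr le_top)]

/-- span of `1` and the `u c` -/
def Msub : Submodule ℝ XX := Submodule.span ℝ ({(1:XX)} ∪ Set.range u)

lemma Msub_mul_closed : ∀ a ∈ Msub, ∀ b ∈ Msub, a * b ∈ Msub := by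
  intro a ha
  induction ha using Submodule.span_induction with
  | mem x hx =>
    rcases hx with hx | ⟨c, rfl⟩
    · rw [Set.mem_singleton_iff] at hx
      subst hx
      intro b hb
      rwa [one_mul]
    · intro b hb
      induction hb using Submodule.span_induction with
      | mem y hy =>
        rcases hy with hy | ⟨c', rfl⟩
        · rw [Set.mem_singleton_iff] at hy
          subst hy
          rw [mul_one]
          exact Submodule.subset_span (Or.inr ⟨c, rfl⟩)
        · rw [u_mul]
          exact Submodule.subset_span (Or.inr ⟨max c c', rfl⟩)
      | zero => rw [mul_zero]; exact Msub.zero_mem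
      | add y1 y2 h1 h2 ih1 ih2 => rw [mul_add]; exact Msub.add_mem ih1 ih2
      | smul r y hy ihy => rw [mul_smul_comm]; exact Msub.smul_mem r ihy
  | zero => intro b hb; rw [zero_mul]; exact Msub.zero_mem
  | add a1 a2 h1 h2 ih1 ih2 => intro b hb; rw [add_mul]; exact Msub.add_mem (ih1 b hb) (ih2 b hb)
  | smul r a0 h0 ih0 => intro b hb; rw [smul_mul_assoc]; exact Msub.smul_mem r (ih0 b hb)

/-- the subalgebra generated by the `u c` is inside `Msub` -/
lemma adjoin_le_Msub : ∀ g ∈ Algebra.adjoin ℝ (Set.range u), g ∈ Msub := by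
  intro g hg
  induction hg using Algebra.adjoin_induction with
  | mem x hx => exact Submodule.subset_span (Or.inr hx)
  | algebraMap r =>
    have : (algebraMap ℝ XX) r = r • (1 : XX) := by
      rw [Algebra.algebraMap_eq_smul_one]
    rw [this]
    exact Msub.smul_mem r (Submodule.subset_span (Or.inl rfl))
  | add x y hx hy ihx ihy => exact Msub.add_mem ihx ihy
  | mul x y hx hy ihx ihy => exact Msub_mul_closed x ihx y ihy

lemma adjoin_separates : (Algebra.adjoin ℝ (Set.range u)).SeparatesPoints := by
  intro z z' hne
  rcases lt_or_gt_of_ne hne with h | h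
  · refine ⟨u z, ⟨u z, Algebra.subset_adjoin ⟨z, rfl⟩, rfl⟩, ?_⟩
    show (if z < z then (1:ℝ) else 0) ≠ (if z < z' then (1:ℝ) else 0)
    rw [if_neg (lt_irrefl z), if_pos h]
    norm_num
  · refine ⟨u z', ⟨u z', Algebra.subset_adjoin ⟨z', rfl⟩, rfl⟩, ?_⟩
    show (if z' < z then (1:ℝ) else 0) ≠ (if z' < z' then (1:ℝ) else 0)
    rw [if_pos h, if_neg (lt_irrefl z')]
    norm_num

/-- Injectivity: an element of `Z` vanishing on all singleton indicators and on `1` is zero. -/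
lemma inj0 (μ : DD) (hμ : μ ∈ Z) (hatoms : ∀ p, NL p → μ (chi p) = 0) (h1 : μ 1 = 0) :
    μ = 0 := by
  -- all interval masses vanish
  have hint : ∀ c c' : OT, c ≤ c' → c' < tp → μ (u c) = μ (u c') := by
    intro c c' hcc hc'
    exact interval_of_atoms μ hμ hcc hc' (fun p hp _ _ => hatoms p hp)
  -- μ (u ⊥) = 0
  have hbotNL : NL (⊥ : OT) := Or.inl (by
    show ((⊥:OT) : Ordinal) = 0
    exact Ordinal.bot_eq_zero)
  have hchibot : chi (⊥ : OT) = 1 - u ⊥ := by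
    rw [chi, if_pos (show ((⊥:OT) : Ordinal) = 0 from Ordinal.bot_eq_zero)]
  have hub : μ (u ⊥) = 0 := by
    have := hatoms ⊥ hbotNL
    rw [hchibot, map_sub, h1] at this
    linarith
  -- all μ (u c) = 0
  have hall : ∀ c : OT, μ (u c) = 0 := by
    intro c
    rcases lt_or_eq_of_le (le_top : c ≤ tp) with h | h
    · rw [← hint ⊥ c bot_le h]; exact hub
    · rw [h, u_top_eq_zero, map_zero]
  -- μ vanishes on Msub
  have hM : ∀ g ∈ Msub, μ g = 0 := by
    intro g hg
    induction hg using Submodule.span_induction with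
    | mem x hx =>
      rcases hx with hx | ⟨c, rfl⟩
      · rw [Set.mem_singleton_iff] at hx; subst hx; exact h1
      · exact hall c
    | zero => exact map_zero μ
    | add x y hx hy ihx ihy => rw [map_add, ihx, ihy]; norm_num
    | smul r x hx ihx => rw [map_smul, ihx]; simp
  -- Stone-Weierstrass
  have hSW := ContinuousMap.subalgebra_topologicalClosure_eq_top_of_separatesPoints
    (Algebra.adjoin ℝ (Set.range u)) adjoin_separates
  have hclosed : IsClosed {g : XX | μ g = 0} := isClosed_eq μ.continuous continuous_const
  have hsub : ((Algebra.adjoin ℝ (Set.range u)) : Set XX) ⊆ {g : XX | μ g = 0} :=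
    fun g hg => hM g (adjoin_le_Msub g hg)
  have hclsub : closure ((Algebra.adjoin ℝ (Set.range u)) : Set XX) ⊆ {g : XX | μ g = 0} :=
    closure_minimal hsub hclosed
  have hzero : ∀ x : XX, μ x = 0 := by
    intro x
    have hx : x ∈ (Algebra.adjoin ℝ (Set.range u)).topologicalClosure := by
      rw [hSW]; trivial
    exact hclsub hx
  ext x
  exact hzero x

/-- sequential continuity of GG along weak-star convergent sequences in Y -/
lemma GG_seq {v : ℕ → WD} (hv : ∀ n, v n ∈ Y) {w : WD} (hw : w ∈ Y)
    (h : Tendsto v atTop (𝓝 w)) : Tendsto (fun n => GG (v n)) atTop (𝓝 (GG w)) := by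
  have heval : ∀ x : XX, Tendsto (fun n => v n x) atTop (𝓝 (w x)) := by
    rw [tendsto_iff_forall_eval_tendsto_topDualPairing] at h
    exact h
  set g : ℕ → Ordinal := fun n => (BB (WeakDual.toStrongDual (v n))).1 with hg
  have hsup : iSup g < w1 := by
    have := Ordinal.iSup_lt_omega_one (f := g)
      (fun n => by rw [← Cardinal.ord_aleph]; exact lt_top_iff_lt.mp (BB_spec _ (hv n)).1)
    rwa [← Cardinal.ord_aleph] at this
  have hwb : (BB (WeakDual.toStrongDual w)).1 < w1 := lt_top_iff_lt.mp (BB_spec _ hw).1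
  set co : Ordinal := max (iSup g) (BB (WeakDual.toStrongDual w)).1 with hco
  have hcow : co < w1 := max_lt hsup hwb
  set c : OT := ⟨co, hcow.le⟩ with hcdef
  have hctop : c < tp := lt_top_iff_lt.mpr hcow
  have hcn : ∀ n, BB (WeakDual.toStrongDual (v n)) ≤ c := by
    intro n
    show g n ≤ co
    exact le_trans (le_ciSup (Ordinal.bddAbove_range _) n) (le_max_left _ _)
  have hcw : BB (WeakDual.toStrongDual w) ≤ c := by
    show (BB (WeakDual.toStrongDual w)).1 ≤ co
    exact le_max_right _ _
  have e1 : ∀ n, GG (v n) = v n 1 - v n (u c) := by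
    intro n
    rw [GG, FF_eval (WeakDual.toStrongDual (v n)) ((mem_Y_iff _).mp (hv n)) (hcn n) hctop]
    rfl
  have e2 : GG w = w 1 - w (u c) := by
    rw [GG, FF_eval (WeakDual.toStrongDual w) ((mem_Y_iff _).mp hw) hcw hctop]
    rfl
  rw [e2]
  exact Tendsto.congr (fun n => (e1 n).symm) ((heval 1).sub (heval (u c)))

lemma clusterPt_eq_of_tendsto {v : ℕ → ℝ} {r c : ℝ} (hv : Tendsto v atTop (𝓝 r))
    (hc : ClusterPt c (Filter.map v atTop)) : c = r := by
  refine eq_of_nhds_neBot (NeBot.mono hc ?_)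
  exact inf_le_inf_left _ hv

lemma clusterPt_map_eval {a : ℕ → WD} {c : WD} (hc : ClusterPt c (Filter.map a atTop)) (x : XX) :
    ClusterPt (c x) (Filter.map (fun n => a n x) atTop) := by
  have hcont : Continuous (fun μ : WD => μ x) := WeakBilin.eval_continuous _ x
  refine hc.map hcont.continuousAt ?_
  rw [Filter.tendsto_map'_iff]
  exact Filter.tendsto_map

lemma aux_tendsto {v : ℕ → ℝ} {r : ℝ} (h : ∀ᶠ n in atTop, |v n - r| < 1/(n+1)) :
    Tendsto v atTop (𝓝 r) := by
  rw [tendsto_iff_dist_tendsto_zero]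
  have h0 : ∀ᶠ n in atTop, dist (v n) r ≤ 1/(n+1 : ℝ) := by
    filter_upwards [h] with n hn
    rw [Real.dist_eq]
    exact hn.le
  have hg : Tendsto (fun n : ℕ => 1/(n+1 : ℝ)) atTop (𝓝 0) :=
    tendsto_one_div_add_atTop_nhds_zero_nat
  exact squeeze_zero' (Filter.Eventually.of_forall (fun n => dist_nonneg)) h0 hg

lemma tendsto_of_unique_cluster {K : Set WD} (hK : IsCompact K) {a : ℕ → WD}
    (ha : ∀ n, a n ∈ K) {z : WD}
    (h : ∀ c, ClusterPt c (Filter.map a atTop) → c = z) : Tendsto a atTop (𝓝 z) := by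
  by_contra hcon
  obtain ⟨s, hs, hsnot⟩ : ∃ s ∈ 𝓝 z, s ∉ Filter.map a atTop := by
    rw [Tendsto, Filter.le_def] at hcon
    push_neg at hcon
    exact hcon
  obtain ⟨O, hOsub, hOopen, hzO⟩ := mem_nhds_iff.mp hs
  have hOnot : {n | a n ∈ O} ∉ (atTop : Filter ℕ) := by
    intro hmem
    exact hsnot (Filter.mem_of_superset hmem (fun n hn => hOsub hn))
  set F := Filter.map a atTop ⊓ Filter.principal (Oᶜ) with hF
  have hFne : F.NeBot := by
    rw [Filter.inf_principal_neBot_iff]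
    intro U hU
    rw [Filter.mem_map] at hU
    by_contra hempty
    rw [Set.not_nonempty_iff_eq_empty] at hempty
    apply hOnot
    refine Filter.mem_of_superset hU (fun n hn => ?_)
    by_contra hnO
    have : a n ∈ U ∩ Oᶜ := ⟨hn, hnO⟩
    rw [hempty] at this
    exact this
  have hFK : F ≤ Filter.principal K := by
    refine le_trans inf_le_left ?_
    rw [Filter.le_principal_iff, Filter.mem_map]
    exact Filter.univ_mem' ha
  obtain ⟨c, hcK, hcF⟩ := hK hFK
  have hc1 : ClusterPt c (Filter.map a atTop) := hcF.mono inf_le_left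
  have hceq : c = z := h c hc1
  have hcO : c ∈ closure (Oᶜ) := mem_closure_iff_clusterPt.mpr (hcF.mono inf_le_right)
  rw [(hOopen.isClosed_compl).closure_eq] at hcO
  exact hcO (hceq ▸ hzO)

/-- The Fréchet-Urysohn style extraction: from a point of the closure of a subset of a
weak-star compact subset of `Y`, extract a weak-star convergent sequence. -/
lemma exists_seq {K : Set WD} (hK : IsCompact K) (hKY : K ⊆ (Y : Set WD)) {A : Set WD}
    (hA : A ⊆ K) {z : WD} (hzY : z ∈ Y) (hz : z ∈ closure A) :
    ∃ a : ℕ → WD, (∀ n, a n ∈ A) ∧ Tendsto a atTop (𝓝 z) := by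
  classical
  -- enumerations of supports
  have hEn0 : ∀ μ : DD, ∃ e : ℕ → OT, suppJ μ ⊆ Set.range e := by
    intro μ
    have hc : (suppJ μ ∪ {⊥}).Countable := (suppJ_countable μ).union (Set.countable_singleton _)
    obtain ⟨e, he⟩ := Set.Countable.exists_eq_range hc ⟨⊥, Or.inr rfl⟩
    exact ⟨e, subset_trans Set.subset_union_left he.subset⟩
  choose En hEn using hEn0
  set zD := WeakDual.toStrongDual z with hzD
  -- existence of approximating elements
  have EX : ∀ (n : ℕ) (prev : Fin n → WD), ∃ μ : WD, μ ∈ A ∧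
      |μ 1 - z 1| < 1/(n+1) ∧
      (∀ k : ℕ, k ≤ n → |μ (chi (En zD k)) - z (chi (En zD k))| < 1/(n+1)) ∧
      (∀ i : Fin n, ∀ k : ℕ, k ≤ n →
        |μ (chi (En (WeakDual.toStrongDual (prev i)) k))
          - z (chi (En (WeakDual.toStrongDual (prev i)) k))| < 1/(n+1)) := by
    intro n prev
    have hev : ∀ (x : XX) (r : ℝ), IsOpen {μ : WD | |μ x - r| < 1/(n+1)} := by
      intro x r
      have hcont : Continuous (fun μ : WD => μ x) := WeakBilin.eval_continuous _ x
      have : {μ : WD | |μ x - r| < 1/(n+1)} = (fun μ : WD => μ x) ⁻¹' (Metric.ball r (1/(n+1))) := by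
        ext μ
        simp [Metric.mem_ball, Real.dist_eq]
      rw [this]
      exact (Metric.isOpen_ball).preimage hcont
    set U : Set WD := {μ : WD | |μ 1 - z 1| < 1/(n+1)} ∩
      (⋂ k : Fin (n+1), {μ : WD | |μ (chi (En zD k.1)) - z (chi (En zD k.1))| < 1/(n+1)}) ∩
      (⋂ q : Fin n × Fin (n+1), {μ : WD |
        |μ (chi (En (WeakDual.toStrongDual (prev q.1)) q.2.1))
          - z (chi (En (WeakDual.toStrongDual (prev q.1)) q.2.1))| < 1/(n+1)}) with hU
    have hUopen : IsOpen U := by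
      refine IsOpen.inter (IsOpen.inter (hev 1 (z 1)) ?_) ?_
      · exact isOpen_iInter_of_finite (fun k => hev _ _)
      · exact isOpen_iInter_of_finite (fun q => hev _ _)
    have hzU : z ∈ U := by
      have hpos : (0:ℝ) < 1/(n+1) := by positivity
      refine ⟨⟨?_, ?_⟩, ?_⟩
      · show |z 1 - z 1| < 1/(n+1); simpa using hpos
      · refine Set.mem_iInter.mpr (fun k => ?_)
        show |z (chi (En zD k.1)) - z (chi (En zD k.1))| < 1/(n+1); simpa using hpos
      · refine Set.mem_iInter.mpr (fun q => ?_)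
        show |z _ - z _| < 1/(n+1); simpa using hpos
    obtain ⟨μ, hμU, hμA⟩ := mem_closure_iff.mp hz U hUopen hzU
    obtain ⟨⟨hμ1, hμ2⟩, hμ3⟩ := hμU
    refine ⟨μ, hμA, hμ1, ?_, ?_⟩
    · intro k hk
      have := Set.mem_iInter.mp hμ2 ⟨k, by omega⟩
      exact this
    · intro i k hk
      have := Set.mem_iInter.mp hμ3 ⟨i, ⟨k, by omega⟩⟩
      exact this
  -- the recursion
  let pick : (n : ℕ) → (Fin n → WD) → WD := fun n prev => (EX n prev).choose
  let hist : (n : ℕ) → Fin n → WD := fun n =>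
    Nat.rec (motive := fun m => Fin m → WD) (fun i => i.elim0)
      (fun m ih => Fin.snoc ih (pick m ih)) n
  let a : ℕ → WD := fun n => hist (n+1) (Fin.last n)
  have hist_succ : ∀ n, hist (n+1) = Fin.snoc (hist n) (pick n (hist n)) := fun n => rfl
  have ha_eq : ∀ n, a n = pick n (hist n) := by
    intro n
    have h0 : a n = hist (n+1) (Fin.last n) := rfl
    rw [h0, hist_succ n, Fin.snoc_last]
  have hist_coh : ∀ m (i : Fin m), hist m i = a i.1 := by
    intro m
    induction m with
    | zero => exact fun i => i.elim0
    | succ m ih =>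
      intro i
      by_cases h : i.1 < m
      · have he : i = Fin.castSucc ⟨i.1, h⟩ := by ext; rfl
        rw [he, hist_succ m, Fin.snoc_castSucc]
        simpa using ih ⟨i.1, h⟩
      · have h1 : i = Fin.last m := by
          ext
          rw [Fin.val_last]
          have := i.2
          omega
        rw [h1, Fin.val_last, hist_succ m, Fin.snoc_last]
        exact (ha_eq m).symm
  have ha_spec : ∀ n, a n ∈ A ∧
      |a n 1 - z 1| < 1/(n+1) ∧
      (∀ k : ℕ, k ≤ n → |a n (chi (En zD k)) - z (chi (En zD k))| < 1/(n+1)) ∧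
      (∀ i : Fin n, ∀ k : ℕ, k ≤ n →
        |a n (chi (En (WeakDual.toStrongDual (a i.1)) k))
          - z (chi (En (WeakDual.toStrongDual (a i.1)) k))| < 1/(n+1)) := by
    intro n
    have hspec := (EX n (hist n)).choose_spec
    rw [show Exists.choose (EX n (hist n)) = a n from (ha_eq n).symm] at hspec
    obtain ⟨h1, h2, h3, h4⟩ := hspec
    refine ⟨h1, h2, h3, fun i k hk => ?_⟩
    have := h4 i k hk
    rwa [hist_coh n i] at this
  have haA : ∀ n, a n ∈ A := fun n => (ha_spec n).1
  refine ⟨a, haA, ?_⟩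
  -- convergence via unique cluster points
  refine tendsto_of_unique_cluster hK (fun n => hA (haA n)) ?_
  intro c hc
  have hcK : c ∈ K := by
    have h1 : ClusterPt c (Filter.principal K) := by
      refine hc.mono ?_
      rw [Filter.le_principal_iff, Filter.mem_map]
      exact Filter.univ_mem' (fun n => hA (haA n))
    have := mem_closure_iff_clusterPt.mpr h1
    rwa [hK.isClosed.closure_eq] at this
  have hcY : c ∈ Y := hKY hcK
  -- show all coordinates agree
  have hone : c 1 = z 1 := by
    refine clusterPt_eq_of_tendsto ?_ (clusterPt_map_eval hc 1)
    exact aux_tendsto (Filter.Eventually.of_forall (fun n => (ha_spec n).2.1))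
  have hatoms : ∀ p : OT, NL p → c (chi p) = z (chi p) := by
    intro p hp
    by_cases hzc : p ∈ suppJ zD
    · obtain ⟨k0, hk0⟩ := hEn zD hzc
      refine clusterPt_eq_of_tendsto ?_ (clusterPt_map_eval hc (chi p))
      refine aux_tendsto ?_
      rw [Filter.eventually_atTop]
      refine ⟨k0, fun n hn => ?_⟩
      have := (ha_spec n).2.2.1 k0 hn
      rwa [hk0] at this
    · by_cases hac : ∃ m, p ∈ suppJ (WeakDual.toStrongDual (a m))
      · obtain ⟨m, hm⟩ := hac
        obtain ⟨k0, hk0⟩ := hEn _ hm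
        refine clusterPt_eq_of_tendsto ?_ (clusterPt_map_eval hc (chi p))
        refine aux_tendsto ?_
        rw [Filter.eventually_atTop]
        refine ⟨max (m+1) k0, fun n hn => ?_⟩
        have hmn : m < n := lt_of_lt_of_le (Nat.lt_succ_self m) (le_trans (le_max_left _ _) hn)
        have := (ha_spec n).2.2.2 ⟨m, hmn⟩ k0 (le_trans (le_max_right _ _) hn)
        rwa [hk0] at this
      · push_neg at hac
        have hz0 : z (chi p) = 0 := by
          by_contra hne
          exact hzc ⟨hp, hne⟩
        have ha0 : ∀ n, a n (chi p) = 0 := by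
          intro n
          by_contra hne
          exact (hac n) ⟨hp, hne⟩
        have : Tendsto (fun n => a n (chi p)) atTop (𝓝 (z (chi p))) := by
          rw [hz0]
          exact Tendsto.congr (fun n => (ha0 n).symm) tendsto_const_nhds
        exact clusterPt_eq_of_tendsto this (clusterPt_map_eval hc (chi p))
  -- conclude by injectivity
  have hd : WeakDual.toStrongDual c - WeakDual.toStrongDual z = 0 := by
    refine inj0 _ (Z.sub_mem hcY hzY) ?_ ?_
    · intro p hp
      show WeakDual.toStrongDual c (chi p) - WeakDual.toStrongDual z (chi p) = 0
      rw [WeakDual.toStrongDual_apply, WeakDual.toStrongDual_apply, hatoms p hp, sub_self]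
    · show WeakDual.toStrongDual c 1 - WeakDual.toStrongDual z 1 = 0
      rw [WeakDual.toStrongDual_apply, WeakDual.toStrongDual_apply, hone, sub_self]
  have : WeakDual.toStrongDual c = WeakDual.toStrongDual z := sub_eq_zero.mp hd
  exact (WeakDual.toStrongDual_inj _ _).mp this

abbrev J := {c : OT // c < tp}

instance : Nonempty J := ⟨⟨⊥, bot_lt_tp⟩⟩

lemma tendsto_DW_top : Tendsto (fun c : J => DW (sc c.1 c.2)) atTop (𝓝 (DW tp)) := by
  rw [tendsto_iff_forall_eval_tendsto_topDualPairing]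
  intro x
  show Tendsto (fun c : J => x (sc c.1 c.2)) atTop (𝓝 (x tp))
  rw [Metric.tendsto_nhds]
  intro ε hε
  have hball : x ⁻¹' Metric.ball (x tp) ε ∈ 𝓝 tp :=
    x.continuous.continuousAt (Metric.ball_mem_nhds _ hε)
  obtain ⟨l, hl, hsub⟩ := exists_Ioc_subset_of_mem_nhds' hball bot_lt_tp
  rw [eventually_atTop]
  refine ⟨⟨l, hl.2⟩, fun c hc => ?_⟩
  have hmem : sc c.1 c.2 ∈ Set.Ioc l tp := by
    constructor
    · exact lt_of_le_of_lt (show l ≤ c.1 from hc) (lt_sc c.2)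
    · exact le_top
  have := hsub hmem
  rwa [Set.mem_preimage, Metric.mem_ball] at this

lemma fY_not_continuous : ¬ Continuous fY := by
  intro hcont
  set yc : J → Y := fun c => ⟨DW (sc c.1 c.2), DW_mem_Y (Or.inl (NL_sc c.1 c.2))⟩ with hyc
  set ytop : Y := ⟨DW tp, DW_mem_Y (Or.inr rfl)⟩ with hytop
  have htendY : Tendsto yc atTop (𝓝 ytop) := by
    rw [tendsto_subtype_rng]
    exact tendsto_DW_top
  have h2 : Tendsto (fun c => fY (yc c)) atTop (𝓝 (fY ytop)) :=
    (hcont.tendsto _).comp htendY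
  have e1 : ∀ c : J, fY (yc c) = 1 := by
    intro c
    show GG (DW (sc c.1 c.2)) = 1
    rw [GG, toD_DW]
    exact FF_Dl_NL (NL_sc c.1 c.2)
  have e2 : fY ytop = 0 := by
    show GG (DW tp) = 0
    rw [GG, toD_DW]
    exact FF_Dl_top
  rw [e2] at h2
  have h3 : Tendsto (fun _ : J => (1:ℝ)) atTop (𝓝 0) := by
    refine Tendsto.congr (fun c => e1 c) h2
  have : (1:ℝ) = 0 := tendsto_nhds_unique tendsto_const_nhds h3
  norm_num at this

lemma grothendieck_fY : GrothendieckCond XX fY := by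
  intro K hKY hconv hbal hKcomp
  intro y0 hy0
  rw [ContinuousWithinAt, Metric.tendsto_nhds]
  by_contra hnot
  push_neg at hnot
  obtain ⟨ε₀, hε₀, hfreq⟩ := hnot
  set A : Set WD := {μ : WD | μ ∈ K ∧ ε₀ ≤ dist (GG μ) (GG y0.1)} with hA
  have hAK : A ⊆ K := fun μ hμ => hμ.1
  have hAcl : (y0 : WD) ∈ closure A := by
    rw [mem_closure_iff]
    intro O hO hzO
    have hU : (Subtype.val ⁻¹' O : Set Y) ∈ 𝓝 y0 :=
      continuous_subtype_val.continuousAt (hO.mem_nhds hzO)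
    have hev : ∀ᶠ y in 𝓝[Subtype.val ⁻¹' K] y0,
        y ∈ (Subtype.val ⁻¹' O : Set Y) ∧ y ∈ (Subtype.val ⁻¹' K : Set Y) :=
      Filter.Eventually.and (mem_nhdsWithin_of_mem_nhds hU) self_mem_nhdsWithin
    obtain ⟨y, hy1, hy2, hy3⟩ := (hfreq.and_eventually hev).exists
    refine ⟨(y : WD), hy2, hy3, ?_⟩
    have : ε₀ ≤ dist (fY y) (fY y0) := hy1
    exact this
  obtain ⟨a, haA, hatend⟩ := exists_seq hKcomp hKY hAK y0.2 hAcl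
  have hGGtend : Tendsto (fun n => GG (a n)) atTop (𝓝 (GG y0.1)) :=
    GG_seq (fun n => hKY ((haA n).1)) y0.2 hatend
  have hdist : Tendsto (fun n => dist (GG (a n)) (GG y0.1)) atTop (𝓝 0) := by
    have := hGGtend.dist (tendsto_const_nhds (x := GG y0.1))
    rwa [dist_self] at this
  have hcon : ε₀ ≤ 0 :=
    ge_of_tendsto hdist (Filter.Eventually.of_forall (fun n => (haA n).2))
  linarith

end

end St12

theorem statement12 :
    ¬ FullyMackeyComplete C(↥(Set.Iic (Cardinal.aleph 1).ord), ℝ) ∧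
    ∃ Y : Submodule ℝ (WeakDual ℝ C(↥(Set.Iic (Cardinal.aleph 1).ord), ℝ)),
      IsNorming C(↥(Set.Iic (Cardinal.aleph 1).ord), ℝ) Y ∧
      NormClosed C(↥(Set.Iic (Cardinal.aleph 1).ord), ℝ) Y ∧
      ∃ f : Y →ₗ[ℝ] ℝ,
        GrothendieckCond C(↥(Set.Iic (Cardinal.aleph 1).ord), ℝ) f ∧ ¬ Continuous f := by
  constructor
  · intro hFMC
    exact St12.fY_not_continuous
      (hFMC St12.Y St12.isNorming_Y St12.normClosed_Y St12.fY St12.grothendieck_fY)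
  · exact ⟨St12.Y, St12.isNorming_Y, St12.normClosed_Y, St12.fY, St12.grothendieck_fY,
      St12.fY_not_continuous⟩
end

section
/- Let X be a real Banach space which is w*-sequentially dense in its bidual, i.e., every x** ∈ X** is the σ(X**,X*)-limit of a sequence contained in the canonical image of X. Then (X**, σ(X**,X*)) has the Mazur property: every linear functional F : X** → ℝ which is σ(X**,X*)-sequentially continuous is σ(X**,X*)-continuous. -/
open Filter Topology

/-- If `X` is weak-star sequentially dense in its bidual, then
`(X**, σ(X**,X*))` has the Mazur property: every `σ(X**,X*)`-sequentially continuous linear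
functional on `X**` is `σ(X**,X*)`-continuous. -/
theorem statement15 (X : Type*) [NormedAddCommGroup X] [NormedSpace ℝ X] [CompleteSpace X]
    (h : ∀ F : WeakDual ℝ (StrongDual ℝ X), ∃ u : ℕ → X,
      Tendsto (fun n => StrongDual.toWeakDual
        (NormedSpace.inclusionInDoubleDual ℝ X (u n))) atTop (𝓝 F)) :
    ∀ F : WeakDual ℝ (StrongDual ℝ X) →ₗ[ℝ] ℝ,
      (∀ (u : ℕ → WeakDual ℝ (StrongDual ℝ X))
        (z : WeakDual ℝ (StrongDual ℝ X)),
        Tendsto u atTop (𝓝 z) → Tendsto (fun n => F (u n)) atTop (𝓝 (F z))) →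
      Continuous F := by
  intro F hseq
  set ι : X → WeakDual ℝ (StrongDual ℝ X) := fun x =>
    StrongDual.toWeakDual (NormedSpace.inclusionInDoubleDual ℝ X x) with hι
  -- ι is continuous from norm topology to weak-star topology
  have hιtend : ∀ (u : ℕ → X) (x : X), Tendsto u atTop (𝓝 x) →
      Tendsto (fun n => ι (u n)) atTop (𝓝 (ι x)) := by
    intro u x hu
    rw [tendsto_iff_forall_eval_tendsto_topDualPairing]
    intro y
    have : Continuous fun x : X => y x := y.continuous
    exact (this.continuousAt.tendsto.comp hu)
  -- f := F ∘ ι as a linear map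
  have hιadd : ∀ a b : X, ι (a + b) = ι a + ι b := by
    intro a b; simp [hι]
  have hιsmul : ∀ (c : ℝ) (a : X), ι (c • a) = c • ι a := by
    intro c a; simp [hι]
  let f : X →ₗ[ℝ] ℝ :=
    { toFun := fun x => F (ι x)
      map_add' := fun a b => by show F (ι (a+b)) = F (ι a) + F (ι b); rw [hιadd]; exact F.map_add _ _
      map_smul' := fun c a => by show F (ι (c • a)) = c • F (ι a); rw [hιsmul]; exact F.map_smul _ _ }
  have hfcont : Continuous f := by
    apply SeqContinuous.continuous
    intro u x hu
    exact hseq _ _ (hιtend u x hu)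
  let f' : StrongDual ℝ X := ⟨f, hfcont⟩
  -- F z = z f' for all z
  have key : ∀ z : WeakDual ℝ (StrongDual ℝ X), F z = z f' := by
    intro z
    obtain ⟨u, hu⟩ := h z
    have h1 : Tendsto (fun n => F (ι (u n))) atTop (𝓝 (F z)) := hseq _ z hu
    have h2 : Tendsto (fun n => (ι (u n)) f') atTop (𝓝 (z f')) :=
      ((WeakDual.eval_continuous f').continuousAt.tendsto).comp hu
    have heq : ∀ n, F (ι (u n)) = (ι (u n)) f' := by
      intro n
      simp [hι, NormedSpace.inclusionInDoubleDual]
      rfl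
    rw [show (fun n => F (ι (u n))) = fun n => (ι (u n)) f' from funext heq] at h1
    exact tendsto_nhds_unique h1 h2
  have : ⇑F = fun z : WeakDual ℝ (StrongDual ℝ X) => z f' := funext key
  rw [this]
  exact WeakDual.eval_continuous f'
end

section
/- Let {N_r : r ∈ ℕ} be a countable family of infinite subsets of ℕ which are pairwise almost disjoint (N_r ∩ N_s is finite whenever r ≠ s), and let (λ_{i,j})_{i,j∈ℕ} be a real matrix satisfying: (i) for every j, λ_{i,j} → 0 as i → ∞; (ii) for every i, Σ_j |λ_{i,j}| < ∞; (iii) Σ_j λ_{i,j} → 1 as i → ∞. Suppose moreover that for every r ∈ ℕ, Σ_{j ∈ N₁ ∪ … ∪ N_r} λ_{i,j} → 0 as i → ∞. Then there exists an infinite set N' ⊆ ℕ such that N' ∩ N_r is finite for every r ∈ ℕ and limsup_{i→∞} Σ_{j ∈ N'} λ_{i,j} ≥ 1/2. -/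
open Filter Topology

namespace Statement16Aux

lemma lemA (g : ℕ → ℝ) (s : Set ℕ) (n : ℕ) (hs : s ⊆ Set.Iio n) :
    |∑' j, s.indicator g j| ≤ ∑ j ∈ Finset.range n, |g j| := by
  have h0 : ∀ b ∉ Finset.range n, s.indicator g b = 0 := by
    intro b hb
    exact Set.indicator_of_notMem (fun hbs => hb (Finset.mem_range.2 (hs hbs))) _
  rw [tsum_eq_sum h0]
  refine (Finset.abs_sum_le_sum_abs _ _).trans (Finset.sum_le_sum fun j _ => ?_)
  by_cases hj : j ∈ s
  · rw [Set.indicator_of_mem hj]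
  · rw [Set.indicator_of_notMem hj]; simp

lemma lemB (g : ℕ → ℝ) (hg : Summable fun j => |g j|)
    (s : Set ℕ) (n : ℕ) (hs : s ⊆ Set.Ici n) :
    |∑' j, s.indicator g j| ≤ ∑' m, |g (m + n)| := by
  have habs : (fun j => |s.indicator g j|) = s.indicator fun j => |g j| := by
    funext j; by_cases hj : j ∈ s <;> simp [Set.indicator_of_mem, Set.indicator_of_notMem, hj]
  have hsum1 : Summable (fun j => |s.indicator g j|) := by
    rw [habs]; exact hg.indicator s
  have h1 : |∑' j, s.indicator g j| ≤ ∑' j, |s.indicator g j| := by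
    simpa [Real.norm_eq_abs] using
      norm_tsum_le_tsum_norm (f := s.indicator g) (by simpa [Real.norm_eq_abs] using hsum1)
  have h2 : ∑' j, |s.indicator g j| ≤ ∑' j, (Set.Ici n).indicator (fun j => |g j|) j := by
    rw [habs]
    exact Summable.tsum_le_tsum
      (Set.indicator_le_indicator_of_subset hs (fun j => abs_nonneg _))
      (hg.indicator s) (hg.indicator _)
  have h3 : ∑' j, (Set.Ici n).indicator (fun j => |g j|) j = ∑' m, |g (m + n)| := by
    have hinj : Function.Injective (fun m : ℕ => m + n) := add_left_injective n
    have hsupp : Function.support ((Set.Ici n).indicator fun j => |g j|) ⊆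
        Set.range (fun m : ℕ => m + n) := by
      intro j hj
      have : j ∈ Set.Ici n := by
        by_contra h
        exact hj (Set.indicator_of_notMem h _)
      have hnj : n ≤ j := this
      exact ⟨j - n, show j - n + n = j by omega⟩
    have := hinj.tsum_eq (f := (Set.Ici n).indicator fun j => |g j|) hsupp
    rw [← this]
    refine tsum_congr fun m => ?_
    exact Set.indicator_of_mem (by simp : m + n ∈ Set.Ici n) _
  linarith


lemma step (N : ℕ → Set ℕ) (lam : ℕ → ℕ → ℝ)
    (h1 : ∀ j, Tendsto (fun i => lam i j) atTop (𝓝 0))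
    (h2 : ∀ i, Summable (fun j => |lam i j|))
    (h3 : Tendsto (fun i => ∑' j, lam i j) atTop (𝓝 1))
    (h4 : ∀ r : ℕ, Tendsto (fun i => ∑' j : ↥(⋃ s ∈ Set.Iic r, N s), lam i (j : ℕ))
      atTop (𝓝 0))
    (k i₀ n₀ : ℕ) :
    ∃ p : ℕ × Finset ℕ × ℕ,
      i₀ < p.1 ∧ n₀ < p.2.2 ∧
      (∀ j ∈ p.2.1, n₀ ≤ j ∧ j ∉ (⋃ s ∈ Set.Iic k, N s) ∧ j < p.2.2) ∧
      (1/2 : ℝ) ≤ ∑ j ∈ p.2.1, lam p.1 j ∧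
      (∑ j ∈ Finset.range n₀, |lam p.1 j|) ≤ (1/2 : ℝ)^k ∧
      (∑' m, |lam p.1 (m + p.2.2)|) ≤ (1/2 : ℝ)^k := by
  classical
  set δ : ℝ := min (1/16) ((1/2)^k) with hδdef
  have hδpos : 0 < δ := lt_min (by norm_num) (by positivity)
  have hδ16 : δ ≤ 1/16 := min_le_left _ _
  have hδk : δ ≤ (1/2 : ℝ)^k := min_le_right _ _
  have e1 : ∀ᶠ i in atTop, |(∑' j, lam i j) - 1| < δ := by
    have := Metric.tendsto_nhds.mp h3 δ hδpos
    simpa [Real.dist_eq] using this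
  have e2 : ∀ᶠ i in atTop, |∑' j : ↥(⋃ s ∈ Set.Iic k, N s), lam i (j : ℕ)| < δ := by
    have := Metric.tendsto_nhds.mp (h4 k) δ hδpos
    simpa [Real.dist_eq] using this
  have e3 : ∀ᶠ i in atTop, ∑ j ∈ Finset.range n₀, |lam i j| < δ := by
    have hsum : Tendsto (fun i => ∑ j ∈ Finset.range n₀, |lam i j|) atTop (𝓝 0) := by
      have h := tendsto_finset_sum (Finset.range n₀)
        (fun j _ => ((h1 j).abs : Tendsto (fun i => |lam i j|) atTop (𝓝 |0|)))
      simpa using h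
    exact hsum.eventually_lt_const hδpos
  have e4 : ∀ᶠ i in atTop, i₀ < i := eventually_gt_atTop i₀
  obtain ⟨i, ⟨⟨hA, hB⟩, hC⟩, hD⟩ := (((e1.and e2).and e3).and e4).exists
  set Mk : Set ℕ := ⋃ s ∈ Set.Iic k, N s with hMk
  set S : Set ℕ := {j | n₀ ≤ j ∧ j ∉ Mk} with hSdef
  set B : Set ℕ := {j | j < n₀ ∧ j ∉ Mk} with hBdef
  have hsumlam : Summable (lam i) :=
    Summable.of_norm (by simpa [Real.norm_eq_abs] using h2 i)
  have hsplit : ∀ j, lam i j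
      = Mk.indicator (lam i) j + B.indicator (lam i) j + S.indicator (lam i) j := by
    intro j
    by_cases hm : j ∈ Mk
    · have hb : j ∉ B := fun h => h.2 hm
      have hs : j ∉ S := fun h => h.2 hm
      simp [Set.indicator_of_mem hm, Set.indicator_of_notMem hb, Set.indicator_of_notMem hs]
    · by_cases hn : j < n₀
      · have hb : j ∈ B := ⟨hn, hm⟩
        have hs : j ∉ S := fun h => absurd h.1 (not_le.2 hn)
        simp [Set.indicator_of_notMem hm, Set.indicator_of_mem hb, Set.indicator_of_notMem hs]
      · have hs : j ∈ S := ⟨not_lt.1 hn, hm⟩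
        have hb : j ∉ B := fun h => hn h.1
        simp [Set.indicator_of_notMem hm, Set.indicator_of_notMem hb, Set.indicator_of_mem hs]
  have sM : Summable (Mk.indicator (lam i)) := hsumlam.indicator _
  have sB : Summable (B.indicator (lam i)) := hsumlam.indicator _
  have sS : Summable (S.indicator (lam i)) := hsumlam.indicator _
  have htsum : ∑' j, lam i j
      = (∑' j, Mk.indicator (lam i) j) + (∑' j, B.indicator (lam i) j)
        + (∑' j, S.indicator (lam i) j) := by
    calc ∑' j, lam i j
        = ∑' j, (Mk.indicator (lam i) j + B.indicator (lam i) j + S.indicator (lam i) j) :=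
          tsum_congr hsplit
      _ = _ := by rw [Summable.tsum_add (sM.add sB) sS, Summable.tsum_add sM sB]
  have hMbound : |∑' j, Mk.indicator (lam i) j| < δ := by
    rw [← tsum_subtype Mk (lam i)]
    exact hB
  have hBbound : |∑' j, B.indicator (lam i) j| < δ := by
    refine lt_of_le_of_lt (lemA (lam i) B n₀ ?_) hC
    intro j hj; exact hj.1
  have hSlow : (1 : ℝ) - 3*δ ≤ ∑' j, S.indicator (lam i) j := by
    have h1' := abs_lt.mp hA
    have h2' := abs_lt.mp hMbound
    have h3' := abs_lt.mp hBbound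
    linarith [htsum]
  set C : ℝ := ∑' j, S.indicator (lam i) j with hCdef
  have hpart : ∀ᶠ m in atTop, C - δ < ∑ j ∈ Finset.range m, S.indicator (lam i) j :=
    (sS.hasSum.tendsto_sum_nat).eventually_const_lt (by linarith)
  obtain ⟨m, hm⟩ := hpart.exists
  set F : Finset ℕ := (Finset.range m).filter (· ∈ S) with hFdef
  have hFsum : ∑ j ∈ F, lam i j = ∑ j ∈ Finset.range m, S.indicator (lam i) j := by
    rw [hFdef, Finset.sum_filter]
    refine (Finset.sum_congr rfl fun j _ => ?_).symm
    by_cases hj : j ∈ S <;> simp [Set.indicator_of_mem, Set.indicator_of_notMem, hj]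
  have htail : Tendsto (fun n => ∑' m', |lam i (m' + n)|) atTop (𝓝 0) :=
    tendsto_sum_nat_add (fun j => |lam i j|)
  obtain ⟨n₁, hn₁⟩ := eventually_atTop.1 (htail.eventually_lt_const hδpos)
  refine ⟨⟨i, F, max n₁ (max m (n₀+1))⟩, hD, (Nat.lt_succ_self n₀).trans_le ((le_max_right m _).trans (le_max_right n₁ _)), ?_, ?_, ?_, ?_⟩
  · intro j hj
    have hj' := Finset.mem_filter.mp hj
    have hjS : j ∈ S := hj'.2
    refine ⟨hjS.1, hjS.2, ?_⟩
    have hjm : j < m := Finset.mem_range.mp hj'.1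
    exact hjm.trans_le ((le_max_left m _).trans (le_max_right n₁ _))
  · have : (1:ℝ) - 4*δ ≤ ∑ j ∈ F, lam i j := by rw [hFsum]; linarith
    linarith
  · exact le_trans (le_of_lt hC) hδk
  · exact le_trans (le_of_lt (hn₁ _ (le_max_left _ _))) hδk


variable (N : ℕ → Set ℕ) (lam : ℕ → ℕ → ℝ)
  (h1 : ∀ j, Tendsto (fun i => lam i j) atTop (𝓝 0))
  (h2 : ∀ i, Summable (fun j => |lam i j|))
  (h3 : Tendsto (fun i => ∑' j, lam i j) atTop (𝓝 1))
  (h4 : ∀ r : ℕ, Tendsto (fun i => ∑' j : ↥(⋃ s ∈ Set.Iic r, N s), lam i (j : ℕ))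
      atTop (𝓝 0))

noncomputable def st : ℕ → ℕ × Finset ℕ × ℕ
  | 0 => (step N lam h1 h2 h3 h4 0 0 0).choose
  | k+1 => (step N lam h1 h2 h3 h4 (k+1) (st k).1 (st k).2.2).choose

noncomputable def pn : ℕ → ℕ
  | 0 => 0
  | k+1 => (st N lam h1 h2 h3 h4 k).2.2

noncomputable def pI : ℕ → ℕ
  | 0 => 0
  | k+1 => (st N lam h1 h2 h3 h4 k).1

lemma st_spec (k : ℕ) :
    pI N lam h1 h2 h3 h4 k < (st N lam h1 h2 h3 h4 k).1 ∧
    pn N lam h1 h2 h3 h4 k < (st N lam h1 h2 h3 h4 k).2.2 ∧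
    (∀ j ∈ (st N lam h1 h2 h3 h4 k).2.1,
      pn N lam h1 h2 h3 h4 k ≤ j ∧ j ∉ (⋃ s ∈ Set.Iic k, N s) ∧
        j < (st N lam h1 h2 h3 h4 k).2.2) ∧
    (1/2 : ℝ) ≤ ∑ j ∈ (st N lam h1 h2 h3 h4 k).2.1, lam (st N lam h1 h2 h3 h4 k).1 j ∧
    (∑ j ∈ Finset.range (pn N lam h1 h2 h3 h4 k), |lam (st N lam h1 h2 h3 h4 k).1 j|)
      ≤ (1/2 : ℝ)^k ∧
    (∑' m, |lam (st N lam h1 h2 h3 h4 k).1 (m + (st N lam h1 h2 h3 h4 k).2.2)|)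
      ≤ (1/2 : ℝ)^k := by
  cases k with
  | zero => exact (step N lam h1 h2 h3 h4 0 0 0).choose_spec
  | succ k =>
      exact (step N lam h1 h2 h3 h4 (k+1)
        (st N lam h1 h2 h3 h4 k).1 (st N lam h1 h2 h3 h4 k).2.2).choose_spec

end Statement16Aux

/-- Given a countable almost disjoint family `{N r}` of infinite subsets of
`ℕ` and a matrix `(λ i j)` with (i) columns tending to `0`, (ii) absolutely summable rows,
(iii) row sums tending to `1`, such that the partial sums over `N 0 ∪ … ∪ N r` tend to `0`
for each `r`, there exists an infinite `N' ⊆ ℕ` almost disjoint from every `N r` with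
`limsup_i Σ_{j ∈ N'} λ i j ≥ 1/2`. -/
theorem statement16 (N : ℕ → Set ℕ) (hNinf : ∀ r, (N r).Infinite)
    (hNad : ∀ r s, r ≠ s → (N r ∩ N s).Finite)
    (lam : ℕ → ℕ → ℝ)
    (h1 : ∀ j, Tendsto (fun i => lam i j) atTop (𝓝 0))
    (h2 : ∀ i, Summable (fun j => |lam i j|))
    (h3 : Tendsto (fun i => ∑' j, lam i j) atTop (𝓝 1))
    (h4 : ∀ r : ℕ, Tendsto (fun i => ∑' j : ↥(⋃ s ∈ Set.Iic r, N s), lam i (j : ℕ))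
      atTop (𝓝 0)) :
    ∃ N' : Set ℕ, N'.Infinite ∧ (∀ r, (N' ∩ N r).Finite) ∧
      ∀ ε > (0 : ℝ), ∃ᶠ i in atTop, 1 / 2 - ε ≤ ∑' j : ↥N', lam i (j : ℕ) := by
  classical
  open Statement16Aux in
  have spec := st_spec N lam h1 h2 h3 h4
  set I : ℕ → ℕ := fun k => (Statement16Aux.st N lam h1 h2 h3 h4 k).1 with hI
  set F : ℕ → Finset ℕ := fun k => (Statement16Aux.st N lam h1 h2 h3 h4 k).2.1 with hF
  set n : ℕ → ℕ := fun k => (Statement16Aux.st N lam h1 h2 h3 h4 k).2.2 with hn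
  have nmono : StrictMono n :=
    strictMono_nat_of_lt_succ fun k => (spec (k+1)).2.1
  have Imono : StrictMono I :=
    strictMono_nat_of_lt_succ fun k => (spec (k+1)).1
  have Felem : ∀ k, ∀ j ∈ F k,
      Statement16Aux.pn N lam h1 h2 h3 h4 k ≤ j ∧ j ∉ (⋃ s ∈ Set.Iic k, N s) ∧ j < n k :=
    fun k => (spec k).2.2.1
  have keylow : ∀ k m, k < m → ∀ j ∈ F m, n k ≤ j := by
    intro k m hkm j hj
    cases m with
    | zero => omega
    | succ m' =>
        have h := (Felem (m'+1) j hj).1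
        have : n k ≤ n m' := nmono.monotone (by omega)
        exact le_trans this h
  have keyhigh : ∀ m k, m < k → ∀ j ∈ F m,
      j < Statement16Aux.pn N lam h1 h2 h3 h4 k := by
    intro m k hmk j hj
    cases k with
    | zero => omega
    | succ k' =>
        have h := (Felem m j hj).2.2
        have : n m ≤ n k' := nmono.monotone (by omega)
        exact lt_of_lt_of_le h this
  have hdisj : ∀ m m', m < m' → ∀ j ∈ F m, j ∉ F m' := by
    intro m m' hmm j hj hj'
    have h1' := (Felem m j hj).2.2
    have h2' := keylow m m' hmm j hj'
    omega
  set N' : Set ℕ := ⋃ k, ((F k : Set ℕ)) with hN'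
  have hmemN' : ∀ j : ℕ, j ∈ N' ↔ ∃ k, j ∈ F k := by
    intro j; simp [hN', Set.mem_iUnion]
  have hNe : ∀ k, (F k).Nonempty := by
    intro k
    rcases Finset.eq_empty_or_nonempty (F k) with h | h
    · exfalso
      have hs := (spec k).2.2.2.1
      rw [show (Statement16Aux.st N lam h1 h2 h3 h4 k).2.1 = F k from rfl, h] at hs
      simp at hs; linarith
    · exact h
  refine ⟨N', ?_, ?_, ?_⟩
  · -- infinite
    refine Set.infinite_of_not_bddAbove ?_
    rintro ⟨b, hb⟩
    obtain ⟨j, hj⟩ := hNe (b+2)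
    have hownb : n (b+1) ≤ j := keylow (b+1) (b+2) (by omega) j hj
    have hbb : b+1 ≤ n (b+1) := nmono.le_apply
    have hjb : j ≤ b := hb ((hmemN' j).2 ⟨b+2, hj⟩)
    omega
  · -- almost disjoint
    intro r
    have hsub : N' ∩ N r ⊆ ⋃ m ∈ Finset.range r, ((F m : Set ℕ)) := by
      rintro j ⟨hj1, hj2⟩
      obtain ⟨m, hm⟩ := (hmemN' j).1 hj1
      by_cases hmr : m < r
      · exact Set.mem_biUnion (Finset.mem_range.2 hmr) hm
      · exfalso
        have hnin := (Felem m j hm).2.1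
        exact hnin (Set.mem_biUnion (Set.mem_Iic.2 (by omega)) hj2)
    exact ((Set.Finite.biUnion (Finset.range r).finite_toSet
      (fun m _ => (F m).finite_toSet))).subset hsub
  · -- frequently
    intro ε hε
    rw [frequently_atTop]
    intro a
    obtain ⟨k₁, hk₁⟩ : ∃ k₁ : ℕ, ((1:ℝ)/2)^k₁ < ε/2 :=
      exists_pow_lt_of_lt_one (by positivity) (by norm_num)
    set k := max a k₁ with hk
    refine ⟨I k, le_trans (le_max_left a k₁) Imono.le_apply, ?_⟩
    set g : ℕ → ℝ := lam (I k) with hg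
    have hgsum : Summable g :=
      Summable.of_norm (by simpa [Real.norm_eq_abs] using h2 (I k))
    set Pset : Set ℕ := {j | ∃ m, m < k ∧ j ∈ F m} with hPset
    set Tset : Set ℕ := {j | ∃ m, k < m ∧ j ∈ F m} with hTset
    have hsplit : ∀ j, N'.indicator g j =
        Pset.indicator g j + ((F k : Set ℕ)).indicator g j + Tset.indicator g j := by
      intro j
      by_cases hj : j ∈ N'
      · obtain ⟨m, hm⟩ := (hmemN' j).1 hj
        rcases lt_trichotomy m k with h | h | h
        · have hP : j ∈ Pset := ⟨m, h, hm⟩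
          have hFk : j ∉ (F k : Set ℕ) := fun hc => hdisj m k h j hm (Finset.mem_coe.1 hc)
          have hT : j ∉ Tset := by
            rintro ⟨m', hm'', hjm'⟩
            exact hdisj m m' (h.trans hm'') j hm hjm'
          simp [Set.indicator_of_mem hj, Set.indicator_of_mem hP,
            Set.indicator_of_notMem hFk, Set.indicator_of_notMem hT]
        · have hmk : j ∈ F k := h ▸ hm
          have hFk : j ∈ (F k : Set ℕ) := Finset.mem_coe.2 hmk
          have hP : j ∉ Pset := by
            rintro ⟨m', hm'', hjm'⟩
            exact hdisj m' k hm'' j hjm' hmk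
          have hT : j ∉ Tset := by
            rintro ⟨m', hm'', hjm'⟩
            exact hdisj k m' hm'' j hmk hjm'
          simp [Set.indicator_of_mem hj, Set.indicator_of_mem hFk,
            Set.indicator_of_notMem hP, Set.indicator_of_notMem hT]
        · have hT : j ∈ Tset := ⟨m, h, hm⟩
          have hFk : j ∉ (F k : Set ℕ) := fun hc => hdisj k m h j (Finset.mem_coe.1 hc) hm
          have hP : j ∉ Pset := by
            rintro ⟨m', hm'', hjm'⟩
            exact hdisj m' m (hm''.trans h) j hjm' hm
          simp [Set.indicator_of_mem hj, Set.indicator_of_mem hT,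
            Set.indicator_of_notMem hP, Set.indicator_of_notMem hFk]
      · have hP : j ∉ Pset := by
          rintro ⟨m', _, hjm'⟩; exact hj ((hmemN' j).2 ⟨m', hjm'⟩)
        have hFk : j ∉ (F k : Set ℕ) := fun hc => hj ((hmemN' j).2 ⟨k, Finset.mem_coe.1 hc⟩)
        have hT : j ∉ Tset := by
          rintro ⟨m', _, hjm'⟩; exact hj ((hmemN' j).2 ⟨m', hjm'⟩)
        simp [Set.indicator_of_notMem hj, Set.indicator_of_notMem hP,
          Set.indicator_of_notMem hFk, Set.indicator_of_notMem hT]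
    have key : (∑' j : ↥N', lam (I k) (j : ℕ)) =
        (∑' j, Pset.indicator g j) + (∑' j, ((F k : Set ℕ)).indicator g j)
          + (∑' j, Tset.indicator g j) := by
      rw [tsum_subtype]
      calc ∑' j, N'.indicator g j
          = ∑' j, (Pset.indicator g j + ((F k : Set ℕ)).indicator g j + Tset.indicator g j) :=
            tsum_congr hsplit
        _ = _ := by
            rw [Summable.tsum_add ((hgsum.indicator _).add (hgsum.indicator _)) (hgsum.indicator _),
              Summable.tsum_add (hgsum.indicator _) (hgsum.indicator _)]
    have hPb : |∑' j, Pset.indicator g j| ≤ ((1:ℝ)/2)^k := by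
      refine le_trans (lemA g Pset (Statement16Aux.pn N lam h1 h2 h3 h4 k) ?_)
        ((spec k).2.2.2.2.1)
      rintro j ⟨m, hm, hjm⟩
      exact keyhigh m k hm j hjm
    have hTb : |∑' j, Tset.indicator g j| ≤ ((1:ℝ)/2)^k := by
      refine le_trans (lemB g (h2 (I k)) Tset (n k) ?_) ((spec k).2.2.2.2.2)
      rintro j ⟨m, hm, hjm⟩
      exact keylow k m hm j hjm
    have hFb : (1/2 : ℝ) ≤ ∑' j, ((F k : Set ℕ)).indicator g j := by
      have heq : ∑' j, ((F k : Set ℕ)).indicator g j = ∑ j ∈ F k, g j := by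
        rw [tsum_eq_sum (s := F k)
          (fun b hb => Set.indicator_of_notMem (by simpa using hb) _)]
        exact Finset.sum_congr rfl fun j hj => Set.indicator_of_mem (by simpa using hj) _
      rw [heq]
      exact (spec k).2.2.2.1
    have hkk₁ : ((1:ℝ)/2)^k ≤ ((1:ℝ)/2)^k₁ :=
      pow_le_pow_of_le_one (by norm_num) (by norm_num) (le_max_right a k₁)
    have hPb' := abs_le.1 hPb
    have hTb' := abs_le.1 hTb
    rw [key]
    linarith
end

section
/- For each countable ordinal α < ω₁, let (λ^α_{i,j})_{i,j∈ℕ} be a real matrix satisfying: (i) for every j, λ^α_{i,j} → 0 as i → ∞; (ii) for every i, Σ_j |λ^α_{i,j}| < ∞; (iii) Σ_j λ^α_{i,j} → 1 as i → ∞. Then there exists an almost disjoint family F (an infinite family of infinite subsets of ℕ with pairwise finite intersections) such that for every α < ω₁ there is N ∈ F for which the sequence (Σ_{j ∈ N} λ^α_{i,j})_{i∈ℕ} does not converge to 0. -/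
open Filter Topology

universe u

namespace S17

/-- the sequence of partial row-sums over a set `M`. -/
noncomputable def sSum (lam : ℕ → ℕ → ℝ) (M : Set ℕ) (i : ℕ) : ℝ :=
  ∑' j : ↥M, lam i (j : ℕ)

lemma sSum_def (lam : ℕ → ℕ → ℝ) (M : Set ℕ) :
    sSum lam M = fun i => ∑' j : ↥M, lam i (j : ℕ) := rfl

/-- `M` witnesses failure for the matrix `lam`. -/
def Fails (lam : ℕ → ℕ → ℝ) (M : Set ℕ) : Prop :=
  ¬ Tendsto (sSum lam M) atTop (𝓝 0)

/-- A "good" family: infinite members, pairwise a.d., and no finite subfamily covers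
a cofinite set. -/
def Good (A : Set (Set ℕ)) : Prop :=
  (∀ N ∈ A, N.Infinite) ∧
  (A.Pairwise fun M N => (M ∩ N).Finite) ∧
  (∀ B : Finset (Set ℕ), ↑B ⊆ A → ((⋃₀ ↑B)ᶜ : Set ℕ).Infinite)

section Helpers

variable {lam : ℕ → ℕ → ℝ}

lemma summable_on (h2 : ∀ i, Summable fun j => |lam i j|) (i : ℕ) (s : Set ℕ) :
    Summable ((fun j => lam i j) ∘ (Subtype.val : s → ℕ)) :=
  (summable_abs_iff.mp (h2 i)).subtype s

lemma summable_abs_on (h2 : ∀ i, Summable fun j => |lam i j|) (i : ℕ) (s : Set ℕ) :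
    Summable ((fun j => |lam i j|) ∘ (Subtype.val : s → ℕ)) :=
  (h2 i).subtype s

/-- Sums over a finite set tend to 0 (columns tend to 0). -/
lemma tendsto_finite (h1 : ∀ j, Tendsto (fun i => lam i j) atTop (𝓝 0))
    {s : Set ℕ} (hs : s.Finite) : Tendsto (sSum lam s) atTop (𝓝 0) := by
  haveI := hs.fintype
  have : Tendsto (fun i => ∑ j : s, lam i (j : ℕ)) atTop (𝓝 (∑ _j : s, (0 : ℝ))) :=
    tendsto_finset_sum _ (fun j _ => h1 j)
  rw [sSum_def]
  simpa [tsum_fintype] using this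

/-- Sums over a union of two a.d. sets tend to 0 if they do over each. -/
lemma tendsto_union (h1 : ∀ j, Tendsto (fun i => lam i j) atTop (𝓝 0))
    (h2 : ∀ i, Summable fun j => |lam i j|) {X Y : Set ℕ} (hfin : (X ∩ Y).Finite)
    (hX : Tendsto (sSum lam X) atTop (𝓝 0)) (hY : Tendsto (sSum lam Y) atTop (𝓝 0)) :
    Tendsto (sSum lam (X ∪ Y)) atTop (𝓝 0) := by
  have key : ∀ i, sSum lam (X ∪ Y) i = sSum lam X i + (sSum lam Y i - sSum lam (X ∩ Y) i) := by
    intro i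
    have hXY : X ∪ Y = X ∪ (Y \ X) := by rw [Set.union_diff_self]
    have e1 : sSum lam (X ∪ Y) i = sSum lam X i + sSum lam (Y \ X) i := by
      rw [sSum, hXY, Summable.tsum_union_disjoint disjoint_sdiff_self_right
        (summable_on h2 i X) (summable_on h2 i (Y \ X))]
      rfl
    have hY2 : (Y ∩ X) ∪ (Y \ X) = Y := Set.inter_union_diff Y X
    have e2 : sSum lam Y i = sSum lam (Y ∩ X) i + sSum lam (Y \ X) i := by
      conv_lhs => rw [sSum, ← hY2]
      rw [Summable.tsum_union_disjoint (Disjoint.mono_left Set.inter_subset_right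
        disjoint_sdiff_self_right) (summable_on h2 i (Y ∩ X)) (summable_on h2 i (Y \ X))]
      rfl
    have : sSum lam (X ∩ Y) i = sSum lam (Y ∩ X) i := by rw [Set.inter_comm]
    rw [e1, this]; linarith [e2]
  have h := hX.add (hY.sub (tendsto_finite h1 hfin))
  simp only [add_zero, sub_zero] at h
  exact h.congr (fun i => (key i).symm)

/-- Sums over a finite union of members of an a.d. "vanishing" family tend to 0. -/
lemma tendsto_sUnion (h1 : ∀ j, Tendsto (fun i => lam i j) atTop (𝓝 0))
    (h2 : ∀ i, Summable fun j => |lam i j|) {A : Set (Set ℕ)}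
    (hAD : A.Pairwise fun M N => (M ∩ N).Finite)
    (hA0 : ∀ M ∈ A, Tendsto (sSum lam M) atTop (𝓝 0)) :
    ∀ B : Finset (Set ℕ), ↑B ⊆ A → Tendsto (sSum lam (⋃₀ ↑B)) atTop (𝓝 0) := by
  classical
  intro B
  induction B using Finset.induction_on with
  | empty =>
    intro _
    rw [sSum_def]
    simpa using tendsto_const_nhds (α := ℝ) (l := atTop (α := ℕ))
  | @insert N B' hN ih =>
    intro hsub
    have hNA : N ∈ A := hsub (Finset.mem_insert_self _ _)
    have hB'A : ↑B' ⊆ A := fun x hx => hsub (Finset.mem_insert_of_mem hx)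
    have hfin : ((⋃₀ ↑B') ∩ N).Finite := by
      have hrw : (⋃₀ ↑B') ∩ N = ⋃ M ∈ (↑B' : Set (Set ℕ)), (M ∩ N) := by
        ext x; simp [Set.mem_sUnion]; tauto
      rw [hrw]
      refine Set.Finite.biUnion B'.finite_toSet (fun M hM => ?_)
      exact hAD (hB'A hM) hNA (by rintro rfl; exact hN hM)
    have : Tendsto (sSum lam ((⋃₀ ↑B') ∪ N)) atTop (𝓝 0) :=
      tendsto_union h1 h2 hfin (ih hB'A) (hA0 N hNA)
    have hset : (⋃₀ ↑(insert N B') : Set ℕ) = (⋃₀ ↑B') ∪ N := by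
      rw [Finset.coe_insert, Set.sUnion_insert, Set.union_comm]
    rwa [hset]

/-- Sums over the complement of a vanishing set tend to 1. -/
lemma tendsto_compl (h2 : ∀ i, Summable fun j => |lam i j|)
    (h3 : Tendsto (fun i => ∑' j, lam i j) atTop (𝓝 1))
    {S : Set ℕ} (hS : Tendsto (sSum lam S) atTop (𝓝 0)) :
    Tendsto (sSum lam Sᶜ) atTop (𝓝 1) := by
  have key : ∀ i, sSum lam Sᶜ i = (∑' j, lam i j) - sSum lam S i := by
    intro i
    have := Summable.tsum_add_tsum_compl (f := fun j => lam i j)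
      (summable_on h2 i S) (summable_on h2 i Sᶜ)
    simp only [sSum]; linarith [this]
  have h := h3.sub hS
  simp only [sub_zero] at h
  exact h.congr (fun i => (key i).symm)

end Helpers

end S17

namespace S17

/-- State of the recursive construction. -/
structure St where
  m : ℕ
  i : ℕ
  F : Finset ℕ
  y : ℕ
  I : Finset ℕ

/-- One-step condition of the recursive construction. -/
def Cond (lam : ℕ → ℕ → ℝ) (W : ℕ → Set ℕ) (k : ℕ) (s s' : St) : Prop :=
  s.m < s'.m ∧ s.y < s'.m ∧ (∀ j ∈ s.F, j < s'.m) ∧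
  (∀ l ∈ s.I, (∑' j : {j : ℕ | j ∉ Finset.range s'.m}, |lam l (j : ℕ)|) ≤ (1/2 : ℝ) ^ k) ∧
  s.i < s'.i ∧
  (∑ j ∈ Finset.range s'.m, |lam s'.i j|) ≤ 1/8 ∧
  s'.F.Nonempty ∧ (∀ j ∈ s'.F, j ∉ W k) ∧ (∀ j ∈ s'.F, s'.m ≤ j) ∧
  (1/2 ≤ ∑ j ∈ s'.F, lam s'.i j) ∧
  s'.y ∉ W k ∧ s'.m ≤ s'.y ∧ s'.y ∉ s'.F ∧
  s'.I = insert s'.i s.I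

lemma cond_step {lam : ℕ → ℕ → ℝ}
    (h1 : ∀ j, Tendsto (fun i => lam i j) atTop (𝓝 0))
    (h2 : ∀ i, Summable fun j => |lam i j|)
    (h3 : Tendsto (fun i => ∑' j, lam i j) atTop (𝓝 1))
    {W : ℕ → Set ℕ}
    (hW0 : ∀ k, Tendsto (sSum lam (W k)) atTop (𝓝 0))
    (hWinf : ∀ k, ((W k)ᶜ : Set ℕ).Infinite)
    (k : ℕ) (s : St) : ∃ s', Cond lam W k s s' := by
  classical
  -- choose m'
  have htail : ∀ l : ℕ, Tendsto
      (fun m => ∑' j : {j : ℕ | j ∉ Finset.range m}, |lam l (j : ℕ)|) atTop (𝓝 0) := by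
    intro l
    exact (tendsto_tsum_compl_atTop_zero (fun j => |lam l j|)).comp tendsto_finset_range
  have hev1 : ∀ᶠ m in atTop, ∀ l ∈ s.I,
      (∑' j : {j : ℕ | j ∉ Finset.range m}, |lam l (j : ℕ)|) ≤ (1/2 : ℝ) ^ k := by
    rw [Filter.eventually_all_finset]
    intro l _
    exact (htail l).eventually_le_const (show (0:ℝ) < (1/2)^k by positivity)
  have hev1' : ∀ᶠ m in atTop, s.m < m ∧ s.y < m ∧ ∀ j ∈ s.F, j < m := by
    refine (eventually_gt_atTop s.m).and ((eventually_gt_atTop s.y).and ?_)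
    rw [Filter.eventually_all_finset]
    exact fun j _ => eventually_gt_atTop j
  obtain ⟨m', hm1, hm2, hm3, hm4⟩ := (hev1.and hev1').exists
  -- the available set D
  set D : Set ℕ := (W k ∪ Set.Iio m')ᶜ with hD
  have hDmem : ∀ j, j ∈ D ↔ j ∉ W k ∧ m' ≤ j := by
    intro j; simp [hD, Set.mem_Iio, not_lt]
  have hD1 : Tendsto (sSum lam D) atTop (𝓝 1) := by
    refine tendsto_compl h2 h3 ?_
    refine tendsto_union h1 h2 ?_ (hW0 k) (tendsto_finite h1 (Set.finite_Iio m'))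
    exact (Set.finite_Iio m').subset Set.inter_subset_right
  -- choose i'
  have hcol : Tendsto (fun i => ∑ j ∈ Finset.range m', |lam i j|) atTop (𝓝 0) := by
    have := tendsto_finset_sum (f := fun j i => |lam i j|) (a := fun _ => (0 : ℝ))
      (Finset.range m') (fun j _ => by simpa using (h1 j).abs)
    simpa using this
  have hev2 : ∀ᶠ i in atTop, ((3/4 : ℝ) ≤ sSum lam D i ∧
      (∑ j ∈ Finset.range m', |lam i j|) ≤ 1/8) ∧ s.i < i := by
    have ha := (hD1.eventually_const_lt (show (3/4:ℝ) < 1 by norm_num)).mono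
      (fun i hi => hi.le)
    have hb := (hcol.eventually_lt_const (show (0:ℝ) < 1/8 by norm_num)).mono
      (fun i hi => hi.le)
    exact (ha.and hb).and (eventually_gt_atTop s.i)
  obtain ⟨i', ⟨hi1, hi2⟩, hi3⟩ := hev2.exists
  -- choose F'
  have hsum : Summable (fun j : ↥D => lam i' (j : ℕ)) := summable_on h2 i' D
  have hHas : HasSum (fun j : ↥D => lam i' (j : ℕ)) (sSum lam D i') := hsum.hasSum
  have hevT : ∀ᶠ T : Finset ↥D in atTop, (1/2 : ℝ) < ∑ j ∈ T, lam i' (j : ℕ) :=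
    hHas.eventually_const_lt (by linarith)
  obtain ⟨T, hT⟩ := hevT.exists
  set F' : Finset ℕ := T.image Subtype.val with hF'
  have hsumF : ∑ j ∈ F', lam i' j = ∑ j ∈ T, lam i' (j : ℕ) := by
    rw [hF']
    exact Finset.sum_image (fun x _ y _ h => Subtype.ext h)
  have hFmem : ∀ j ∈ F', j ∈ D := by
    intro j hj
    rw [hF', Finset.mem_image] at hj
    obtain ⟨x, _, rfl⟩ := hj
    exact x.2
  have hFne : F'.Nonempty := by
    rcases T.eq_empty_or_nonempty with rfl | hTne
    · norm_num at hT
    · rw [hF']; exact hTne.image _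
  -- choose y'
  have hDinf : (D \ ↑F').Infinite := by
    have : ((W k)ᶜ \ Set.Iio m').Infinite := (hWinf k).diff (Set.finite_Iio m')
    have hDeq : D = (W k)ᶜ \ Set.Iio m' := by rw [hD, Set.compl_union, Set.diff_eq]
    exact (hDeq ▸ this).diff F'.finite_toSet
  obtain ⟨y', hy'⟩ := hDinf.nonempty
  refine ⟨⟨m', i', F', y', insert i' s.I⟩, hm2, hm3, hm4, hm1, hi3, hi2, hFne,
    (fun j hj => ((hDmem j).mp (hFmem j hj)).1), (fun j hj => ((hDmem j).mp (hFmem j hj)).2),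
    by rw [hsumF]; exact hT.le, ((hDmem y').mp hy'.1).1, ((hDmem y').mp hy'.1).2, hy'.2, rfl⟩

end S17

namespace S17

variable {lam : ℕ → ℕ → ℝ}

lemma abs_sSum_le (h2 : ∀ i, Summable fun j => |lam i j|) {s t : Set ℕ} (hst : s ⊆ t)
    (i : ℕ) : |sSum lam s i| ≤ ∑' j : ↥t, |lam i (j : ℕ)| := by
  have hA : |sSum lam s i| ≤ ∑' j : ↥s, |lam i (j : ℕ)| := by
    have hs : Summable (fun j : ↥s => ‖lam i (j : ℕ)‖) := by
      simpa [Real.norm_eq_abs, Function.comp_def] using summable_abs_on h2 i s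
    have := norm_tsum_le_tsum_norm (f := fun j : ↥s => lam i (j : ℕ)) hs
    simpa [Real.norm_eq_abs, sSum] using this
  refine hA.trans ?_
  rw [tsum_subtype s (fun j => |lam i j|), tsum_subtype t (fun j => |lam i j|)]
  exact Summable.tsum_le_tsum
    (fun j => Set.indicator_le_indicator_of_subset hst (fun a => abs_nonneg _) j)
    ((h2 i).indicator s) ((h2 i).indicator t)

lemma key (h1 : ∀ j, Tendsto (fun i => lam i j) atTop (𝓝 0))
    (h2 : ∀ i, Summable fun j => |lam i j|)
    (h3 : Tendsto (fun i => ∑' j, lam i j) atTop (𝓝 1))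
    {A : Set (Set ℕ)} (hAc : A.Countable) (hG : Good A)
    (hA0 : ∀ M ∈ A, Tendsto (sSum lam M) atTop (𝓝 0)) :
    ∃ M : Set ℕ, M.Infinite ∧ (∀ N ∈ A, (M ∩ N).Finite) ∧
      (∀ B : Finset (Set ℕ), ↑B ⊆ A → (((⋃₀ ↑B) ∪ M)ᶜ : Set ℕ).Infinite) ∧
      Fails lam M := by
  classical
  obtain ⟨hGinf, hGad, hGnc⟩ := hG
  -- enumerate `insert ∅ A`
  obtain ⟨e, he⟩ := (hAc.insert ∅).exists_eq_range (Set.insert_nonempty _ _)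
  have heA : ∀ l, e l ∈ insert (∅ : Set ℕ) A := fun l => he ▸ Set.mem_range_self l
  have hsurj : ∀ N ∈ A, ∃ l, e l = N := by
    intro N hN
    have : N ∈ Set.range e := he ▸ Set.mem_insert_of_mem _ hN
    exact this
  have he0' : ∀ M ∈ insert (∅ : Set ℕ) A, Tendsto (sSum lam M) atTop (𝓝 0) := by
    intro M hM
    rcases Set.mem_insert_iff.mp hM with rfl | hM
    · rw [sSum_def]; simpa using tendsto_const_nhds (α := ℝ) (l := atTop (α := ℕ))
    · exact hA0 M hM
  have hAD' : (insert (∅ : Set ℕ) A).Pairwise (fun M N => (M ∩ N).Finite) := by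
    rw [Set.pairwise_insert]
    exact ⟨hGad, fun N _ _ => ⟨by simp, by simp⟩⟩
  -- the increasing union W
  set W : ℕ → Set ℕ := fun k => ⋃₀ ↑((Finset.range (k + 1)).image e) with hWdef
  have hWB : ∀ k, ↑((Finset.range (k + 1)).image e) ⊆ insert (∅ : Set ℕ) A := by
    intro k x hx
    rw [Finset.coe_image] at hx
    obtain ⟨l, _, rfl⟩ := hx
    exact heA l
  have hW0 : ∀ k, Tendsto (sSum lam (W k)) atTop (𝓝 0) := fun k =>
    tendsto_sUnion h1 h2 hAD' he0' _ (hWB k)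
  have hsubW : ∀ l k, l ≤ k → e l ⊆ W k := by
    intro l k hlk
    refine Set.subset_sUnion_of_mem ?_
    rw [Finset.coe_image]
    exact ⟨l, by simpa using Nat.lt_succ_of_le hlk, rfl⟩
  have hWinf : ∀ k, ((W k)ᶜ : Set ℕ).Infinite := by
    intro k
    set B := (Finset.range (k + 1)).image e with hB
    have heq : (⋃₀ ↑B : Set ℕ) = ⋃₀ ↑(B.erase ∅) := by
      ext x
      simp only [Set.mem_sUnion, Finset.mem_coe, Finset.mem_erase]
      constructor
      · rintro ⟨t, ht, hx⟩
        exact ⟨t, ⟨by rintro rfl; exact hx, ht⟩, hx⟩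
      · rintro ⟨t, ⟨_, ht⟩, hx⟩
        exact ⟨t, ht, hx⟩
    have : (W k : Set ℕ) = ⋃₀ ↑(B.erase ∅) := heq
    rw [this]
    refine hGnc _ ?_
    intro t ht
    rw [Finset.coe_erase] at ht
    obtain ⟨ht1, ht2⟩ := ht
    rcases Set.mem_insert_iff.mp (hWB k ht1) with rfl | h
    · exact absurd rfl ht2
    · exact h
  -- run the recursive construction
  let s0 : St := ⟨0, 0, ∅, 0, ∅⟩
  let σ : ℕ → St := fun n => Nat.rec s0 (fun k s => (cond_step h1 h2 h3 hW0 hWinf k s).choose) n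
  have hσ : ∀ k, Cond lam W k (σ k) (σ (k + 1)) :=
    fun k => (cond_step h1 h2 h3 hW0 hWinf k (σ k)).choose_spec
  set mm : ℕ → ℕ := fun k => (σ (k + 1)).m with hmmdef
  set ii : ℕ → ℕ := fun k => (σ (k + 1)).i with hiidef
  set FF : ℕ → Finset ℕ := fun k => (σ (k + 1)).F with hFFdef
  set yy : ℕ → ℕ := fun k => (σ (k + 1)).y with hyydef
  have hmm : StrictMono mm := strictMono_nat_of_lt_succ (fun k => (hσ (k + 1)).1)
  have hii : StrictMono ii := strictMono_nat_of_lt_succ (fun k => (hσ (k + 1)).2.2.2.2.1)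
  have hiI : ∀ k, ii k ∈ (σ (k + 1)).I := by
    intro k
    rw [(hσ k).2.2.2.2.2.2.2.2.2.2.2.2.2]
    exact Finset.mem_insert_self _ _
  have htail : ∀ k, (∑' j : {j : ℕ | j ∉ Finset.range (mm (k + 1))}, |lam (ii k) (j : ℕ)|)
      ≤ (1/2 : ℝ) ^ (k + 1) := fun k => (hσ (k + 1)).2.2.2.1 (ii k) (hiI k)
  have hFlow : ∀ k, ∀ j ∈ FF k, mm k ≤ j := fun k => (hσ k).2.2.2.2.2.2.2.2.1
  have hFhigh : ∀ k, ∀ j ∈ FF k, j < mm (k + 1) := fun k => (hσ (k + 1)).2.2.1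
  have hFW : ∀ k, ∀ j ∈ FF k, j ∉ W k := fun k => (hσ k).2.2.2.2.2.2.2.1
  have hFne : ∀ k, (FF k).Nonempty := fun k => (hσ k).2.2.2.2.2.2.1
  have hFsum : ∀ k, (1/2 : ℝ) ≤ ∑ j ∈ FF k, lam (ii k) j :=
    fun k => (hσ k).2.2.2.2.2.2.2.2.2.1
  have hrow : ∀ k, (∑ j ∈ Finset.range (mm k), |lam (ii k) j|) ≤ 1/8 :=
    fun k => (hσ k).2.2.2.2.2.1
  have hyW : ∀ k, yy k ∉ W k := fun k => (hσ k).2.2.2.2.2.2.2.2.2.2.1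
  have hylow : ∀ k, mm k ≤ yy k := fun k => (hσ k).2.2.2.2.2.2.2.2.2.2.2.1
  have hyhigh : ∀ k, yy k < mm (k + 1) := fun k => (hσ (k + 1)).2.1
  have hyF : ∀ k, yy k ∉ FF k := fun k => (hσ k).2.2.2.2.2.2.2.2.2.2.2.2.1
  set Mstar : Set ℕ := ⋃ k, (↑(FF k) : Set ℕ) with hMdef
  have hMmem : ∀ x, x ∈ Mstar ↔ ∃ k, x ∈ FF k := by
    intro x; rw [hMdef]; simp [Set.mem_iUnion]
  -- 1. infinite
  have hMinf : Mstar.Infinite := by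
    refine Set.infinite_of_not_bddAbove ?_
    rintro ⟨b, hb⟩
    obtain ⟨x, hx⟩ := hFne (b + 1)
    have hxM : x ∈ Mstar := (hMmem x).mpr ⟨b + 1, hx⟩
    have : b + 1 ≤ x := le_trans (hmm.le_apply) (hFlow _ x hx)
    have := hb hxM
    omega
  -- 2. almost disjoint from A
  have hMad : ∀ N ∈ A, (Mstar ∩ N).Finite := by
    intro N hN
    obtain ⟨l, rfl⟩ := hsurj N hN
    have hsub : Mstar ∩ e l ⊆ ⋃ k ∈ Finset.range l, (↑(FF k) : Set ℕ) := by
      rintro x ⟨hx1, hx2⟩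
      obtain ⟨k, hk⟩ := (hMmem x).mp hx1
      rcases lt_or_ge k l with h | h
      · exact Set.mem_biUnion (Finset.mem_range.mpr h) hk
      · exact absurd (hsubW l k h hx2) (hFW k x hk)
    exact ((Finset.range l).finite_toSet.biUnion (fun k _ => (FF k).finite_toSet)).subset hsub
  -- y's avoid Mstar
  have hyM : ∀ k, yy k ∉ Mstar := by
    intro k hk
    obtain ⟨j, hj⟩ := (hMmem (yy k)).mp hk
    rcases lt_trichotomy j k with h | rfl | h
    · have h1' := hFhigh j (yy k) hj
      have h2' : mm (j + 1) ≤ mm k := hmm.monotone (show j + 1 ≤ k from h)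
      have h3' := hylow k
      omega
    · exact hyF j hj
    · have h1' := hFlow j (yy k) hj
      have h2' : mm (k + 1) ≤ mm j := hmm.monotone (show k + 1 ≤ j from h)
      have h3' := hyhigh k
      omega
  have hymono : StrictMono yy :=
    strictMono_nat_of_lt_succ (fun k => lt_of_lt_of_le (hyhigh k) (hylow (k + 1)))
  -- 3. non-covering
  have hMnc : ∀ B : Finset (Set ℕ), ↑B ⊆ A → (((⋃₀ ↑B) ∪ Mstar)ᶜ : Set ℕ).Infinite := by
    have haux : ∀ B : Finset (Set ℕ), ↑B ⊆ A →
        ∃ k0, ∀ k, k0 ≤ k → (⋃₀ ↑B : Set ℕ) ⊆ W k := by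
      intro B
      induction B using Finset.induction_on with
      | empty => exact fun _ => ⟨0, by simp⟩
      | @insert N B' hN ih =>
        intro hsub
        obtain ⟨k0, hk0⟩ := ih (fun x hx => hsub (Finset.mem_insert_of_mem hx))
        obtain ⟨l, rfl⟩ := hsurj N (hsub (Finset.mem_insert_self _ _))
        refine ⟨max k0 l, fun k hk => ?_⟩
        rw [Finset.coe_insert, Set.sUnion_insert]
        exact Set.union_subset (hsubW l k (le_trans (le_max_right _ _) hk))
          (hk0 k (le_trans (le_max_left _ _) hk))
    intro B hB
    obtain ⟨k0, hk0⟩ := haux B hB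
    refine Set.infinite_of_injective_forall_mem (f := fun n : ℕ => yy (k0 + n)) ?_ ?_
    · exact fun a b hab => by
        have := hymono.injective hab; omega
    · intro n
      simp only [Set.mem_compl_iff, Set.mem_union, not_or]
      constructor
      · intro hmem
        exact hyW (k0 + n) (hk0 (k0 + n) (Nat.le_add_right _ _) hmem)
      · exact hyM (k0 + n)
  -- 4. failure
  have hbound : ∀ k, 2 ≤ k → (1/4 : ℝ) ≤ sSum lam Mstar (ii k) := by
    intro k hk
    set P : Set ℕ := Mstar ∩ Set.Iio (mm k) with hPdef
    set R : Set ℕ := Mstar ∩ {j | mm (k + 1) ≤ j} with hRdef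
    have hsplit : Mstar = P ∪ ((↑(FF k) : Set ℕ) ∪ R) := by
      ext x
      constructor
      · intro hx
        obtain ⟨j, hj⟩ := (hMmem x).mp hx
        rcases lt_trichotomy j k with h | rfl | h
        · exact Or.inl ⟨hx, lt_of_lt_of_le (hFhigh j x hj) (hmm.monotone (Nat.succ_le_of_lt h))⟩
        · exact Or.inr (Or.inl hj)
        · exact Or.inr (Or.inr ⟨hx, le_trans (hmm.monotone (Nat.succ_le_of_lt h)) (hFlow j x hj)⟩)
      · rintro (⟨h, _⟩ | (h | ⟨h, _⟩))
        · exact h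
        · exact (hMmem x).mpr ⟨k, h⟩
        · exact h
    have hd1 : Disjoint P ((↑(FF k) : Set ℕ) ∪ R) := by
      rw [Set.disjoint_left]
      rintro x ⟨_, hxlt⟩ (hx | ⟨_, hxge⟩)
      · exact absurd (hFlow k x hx) (not_le.mpr hxlt)
      · have hle : mm k ≤ mm (k + 1) := hmm.monotone (Nat.le_succ k)
        simp only [Set.mem_Iio] at hxlt
        simp only [Set.mem_setOf_eq] at hxge
        omega
    have hd2 : Disjoint (↑(FF k) : Set ℕ) R := by
      rw [Set.disjoint_left]
      rintro x hx ⟨_, hxge⟩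
      exact absurd (hFhigh k x hx) (not_lt.mpr hxge)
    have e1 : sSum lam Mstar (ii k)
        = sSum lam P (ii k) + (sSum lam (↑(FF k) : Set ℕ) (ii k) + sSum lam R (ii k)) := by
      rw [hsplit]
      simp only [sSum_def]
      rw [Summable.tsum_union_disjoint hd1 (summable_on h2 _ _) (summable_on h2 _ _),
        Summable.tsum_union_disjoint hd2 (summable_on h2 _ _) (summable_on h2 _ _)]
    have hP : |sSum lam P (ii k)| ≤ 1/8 := by
      have hPs : P ⊆ (↑(Finset.range (mm k)) : Set ℕ) := by
        rintro x ⟨_, hx⟩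
        simpa using hx
      refine (abs_sSum_le h2 hPs (ii k)).trans ?_
      rw [Finset.tsum_subtype' (Finset.range (mm k)) (fun j => |lam (ii k) j|)]
      exact hrow k
    have hF : (1/2 : ℝ) ≤ sSum lam (↑(FF k) : Set ℕ) (ii k) := by
      simp only [sSum_def]
      rw [Finset.tsum_subtype' (FF k) (fun j => lam (ii k) j)]
      exact hFsum k
    have hR : |sSum lam R (ii k)| ≤ (1/2 : ℝ) ^ (k + 1) := by
      have hRs : R ⊆ {j : ℕ | j ∉ Finset.range (mm (k + 1))} := by
        rintro x ⟨_, hx⟩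
        simpa using hx
      exact (abs_sSum_le h2 hRs (ii k)).trans (htail k)
    have hpow : (1/2 : ℝ) ^ (k + 1) ≤ 1/8 := by
      have : (1/2 : ℝ) ^ (k + 1) ≤ (1/2 : ℝ) ^ 3 :=
        pow_le_pow_of_le_one (by norm_num) (by norm_num) (by omega)
      simpa using this.trans (by norm_num)
    have hPa := abs_le.mp hP
    have hRa := abs_le.mp hR
    rw [e1]
    linarith [hPa.1, hRa.1, hF, hpow]
  refine ⟨Mstar, hMinf, hMad, hMnc, ?_⟩
  intro hT
  have h4 := (hT.comp hii.tendsto_atTop).eventually_lt_const (show (0:ℝ) < 1/4 by norm_num)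
  obtain ⟨k, hklt, hk2⟩ := (h4.and (eventually_ge_atTop 2)).exists
  have := hbound k hk2
  simp only [Function.comp] at hklt
  linarith

end S17

namespace S17

/-- Extension of a countable non-covering family by one more a.d. set. -/
lemma extend {A : Set (Set ℕ)} (hAc : A.Countable)
    (hGnc : ∀ B : Finset (Set ℕ), ↑B ⊆ A → ((⋃₀ ↑B)ᶜ : Set ℕ).Infinite) :
    ∃ P : Set ℕ, P.Infinite ∧ (∀ N ∈ A, (P ∩ N).Finite) ∧
      (∀ B : Finset (Set ℕ), ↑B ⊆ A → (((⋃₀ ↑B) ∪ P)ᶜ : Set ℕ).Infinite) := by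
  classical
  obtain ⟨e, he⟩ := (hAc.insert ∅).exists_eq_range (Set.insert_nonempty _ _)
  have heA : ∀ l, e l ∈ insert (∅ : Set ℕ) A := fun l => he ▸ Set.mem_range_self l
  have hsurj : ∀ N ∈ A, ∃ l, e l = N := by
    intro N hN
    have : N ∈ Set.range e := he ▸ Set.mem_insert_of_mem _ hN
    exact this
  set W : ℕ → Set ℕ := fun k => ⋃₀ ↑((Finset.range (k + 1)).image e) with hWdef
  have hWB : ∀ k, ↑((Finset.range (k + 1)).image e) ⊆ insert (∅ : Set ℕ) A := by
    intro k x hx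
    rw [Finset.coe_image] at hx
    obtain ⟨l, _, rfl⟩ := hx
    exact heA l
  have hsubW : ∀ l k, l ≤ k → e l ⊆ W k := by
    intro l k hlk
    refine Set.subset_sUnion_of_mem ?_
    rw [Finset.coe_image]
    exact ⟨l, by simpa using Nat.lt_succ_of_le hlk, rfl⟩
  have hWinf : ∀ k, ((W k)ᶜ : Set ℕ).Infinite := by
    intro k
    set B := (Finset.range (k + 1)).image e with hB
    have heq : (⋃₀ ↑B : Set ℕ) = ⋃₀ ↑(B.erase ∅) := by
      ext x
      simp only [Set.mem_sUnion, Finset.mem_coe, Finset.mem_erase]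
      constructor
      · rintro ⟨t, ht, hx⟩
        exact ⟨t, ⟨by rintro rfl; exact hx, ht⟩, hx⟩
      · rintro ⟨t, ⟨_, ht⟩, hx⟩
        exact ⟨t, ht, hx⟩
    have : (W k : Set ℕ) = ⋃₀ ↑(B.erase ∅) := heq
    rw [this]
    refine hGnc _ ?_
    intro t ht
    rw [Finset.coe_erase] at ht
    obtain ⟨ht1, ht2⟩ := ht
    rcases Set.mem_insert_iff.mp (hWB k ht1) with rfl | h
    · exact absurd rfl ht2
    · exact h
  -- diagonal sequence
  have hz : ∀ (k b : ℕ), ∃ x, x ∈ (W k)ᶜ ∧ b < x := by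
    intro k b
    obtain ⟨x, hx1, hx2⟩ := (hWinf k).exists_gt b
    exact ⟨x, hx1, hx2⟩
  let z : ℕ → ℕ := fun n => Nat.rec (hz 0 0).choose (fun k zk => (hz (k + 1) zk).choose) n
  have hzW : ∀ k, z k ∈ (W k)ᶜ := by
    intro k
    cases k with
    | zero => exact (hz 0 0).choose_spec.1
    | succ k => exact (hz (k + 1) (z k)).choose_spec.1
  have hzmono : StrictMono z := by
    refine strictMono_nat_of_lt_succ (fun k => ?_)
    exact (hz (k + 1) (z k)).choose_spec.2
  refine ⟨Set.range (fun n => z (2 * n)), ?_, ?_, ?_⟩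
  · exact Set.infinite_range_of_injective
      (fun a b hab => by have := hzmono.injective hab; omega)
  · intro N hN
    obtain ⟨l, rfl⟩ := hsurj N hN
    have hsub : Set.range (fun n => z (2 * n)) ∩ e l ⊆ (fun n => z (2 * n)) '' Set.Iio l := by
      rintro x ⟨⟨n, rfl⟩, hx2⟩
      refine ⟨n, ?_, rfl⟩
      simp only [Set.mem_Iio]
      by_contra hcon
      push_neg at hcon
      exact (hzW (2 * n)) (hsubW l (2 * n) (by omega) hx2)
    exact ((Set.finite_Iio l).image _).subset hsub
  · have haux : ∀ B : Finset (Set ℕ), ↑B ⊆ A →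
        ∃ k0, ∀ k, k0 ≤ k → (⋃₀ ↑B : Set ℕ) ⊆ W k := by
      intro B
      induction B using Finset.induction_on with
      | empty => exact fun _ => ⟨0, by simp⟩
      | @insert N B' hN ih =>
        intro hsub
        obtain ⟨k0, hk0⟩ := ih (fun x hx => hsub (Finset.mem_insert_of_mem hx))
        obtain ⟨l, rfl⟩ := hsurj N (hsub (Finset.mem_insert_self _ _))
        refine ⟨max k0 l, fun k hk => ?_⟩
        rw [Finset.coe_insert, Set.sUnion_insert]
        exact Set.union_subset (hsubW l k (le_trans (le_max_right _ _) hk))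
          (hk0 k (le_trans (le_max_left _ _) hk))
    intro B hB
    obtain ⟨k0, hk0⟩ := haux B hB
    refine Set.infinite_of_injective_forall_mem
      (f := fun n : ℕ => z (2 * (k0 + n) + 1)) ?_ ?_
    · intro a b hab
      simp only at hab
      have h' : 2 * (k0 + a) + 1 = 2 * (k0 + b) + 1 := hzmono.injective hab
      omega
    · intro n
      simp only [Set.mem_compl_iff, Set.mem_union, not_or]
      constructor
      · intro hmem
        exact hzW (2 * (k0 + n) + 1) (hk0 _ (by omega) hmem)
      · rintro ⟨m, hm⟩
        simp only at hm
        have h' : 2 * m = 2 * (k0 + n) + 1 := hzmono.injective hm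
        omega

/-- Inserting a compatible set preserves `Good`. -/
lemma good_insert {A : Set (Set ℕ)} (hG : Good A) {P : Set ℕ} (hPinf : P.Infinite)
    (hPad : ∀ N ∈ A, (P ∩ N).Finite)
    (hPnc : ∀ B : Finset (Set ℕ), ↑B ⊆ A → (((⋃₀ ↑B) ∪ P)ᶜ : Set ℕ).Infinite) :
    Good (insert P A) := by
  classical
  obtain ⟨hGinf, hGad, hGnc⟩ := hG
  refine ⟨?_, ?_, ?_⟩
  · intro N hN
    rcases Set.mem_insert_iff.mp hN with rfl | h
    · exact hPinf
    · exact hGinf N h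
  · rw [Set.pairwise_insert]
    exact ⟨hGad, fun N hN _ => ⟨hPad N hN, by rw [Set.inter_comm]; exact hPad N hN⟩⟩
  · intro B hB
    by_cases hP : P ∈ B
    · have hBd : (B.erase P : Set (Set ℕ)) ⊆ A := by
        intro t ht
        rw [Finset.coe_erase] at ht
        rcases Set.mem_insert_iff.mp (hB ht.1) with rfl | h
        · exact absurd rfl ht.2
        · exact h
      have : (⋃₀ ↑B : Set ℕ) = (⋃₀ ↑(B.erase P)) ∪ P := by
        conv_lhs => rw [← Finset.insert_erase hP]
        rw [Finset.coe_insert, Set.sUnion_insert, Set.union_comm]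
      rw [this]
      exact hPnc _ hBd
    · have hBd : (B : Set (Set ℕ)) ⊆ A := by
        intro t ht
        rcases Set.mem_insert_iff.mp (hB ht) with rfl | h
        · exact absurd ht hP
        · exact h
      exact hGnc B hBd

/-- The combined step: handle one matrix, preserving `Good`, and adding a fresh set `P`. -/
lemma mainStep {lam : ℕ → ℕ → ℝ}
    (h1 : ∀ j, Tendsto (fun i => lam i j) atTop (𝓝 0))
    (h2 : ∀ i, Summable fun j => |lam i j|)
    (h3 : Tendsto (fun i => ∑' j, lam i j) atTop (𝓝 1))
    {A : Set (Set ℕ)} (hAc : A.Countable) (hG : Good A) :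
    ∃ M P : Set ℕ, Good (insert P (insert M A)) ∧
      (∃ N ∈ insert P (insert M A), Fails lam N) ∧
      P.Infinite ∧ (∀ N ∈ A, (P ∩ N).Finite) := by
  by_cases hex : ∃ N ∈ A, Fails lam N
  · obtain ⟨P, hPinf, hPad, hPnc⟩ := extend hAc hG.2.2
    obtain ⟨N, hNA, hNf⟩ := hex
    refine ⟨P, P, ?_, ⟨N, ?_, hNf⟩, hPinf, hPad⟩
    · rw [Set.insert_idem]
      exact good_insert hG hPinf hPad hPnc
    · exact Set.mem_insert_of_mem _ (Set.mem_insert_of_mem _ hNA)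
  · push_neg at hex
    have hA0 : ∀ M ∈ A, Tendsto (sSum lam M) atTop (𝓝 0) := by
      intro M hM
      have := hex M hM
      rw [Fails, not_not] at this
      exact this
    obtain ⟨M, hMinf, hMad, hMnc, hMf⟩ := key h1 h2 h3 hAc hG hA0
    have hGM : Good (insert M A) := good_insert hG hMinf hMad hMnc
    obtain ⟨P, hPinf, hPad, hPnc⟩ := extend (hAc.insert M) hGM.2.2
    refine ⟨M, P, good_insert hGM hPinf hPad hPnc,
      ⟨M, Set.mem_insert_of_mem _ (Set.mem_insert _ _), hMf⟩, hPinf,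
      fun N hN => hPad N (Set.mem_insert_of_mem _ hN)⟩

end S17

namespace S17

open scoped Classical in
/-- Total (choice-made) version of `mainStep`. -/
noncomputable def pickPair (lam : ℕ → ℕ → ℝ) (A : Set (Set ℕ)) : Set ℕ × Set ℕ :=
  if h : (∀ j, Tendsto (fun i => lam i j) atTop (𝓝 0)) ∧
      (∀ i, Summable fun j => |lam i j|) ∧
      (Tendsto (fun i => ∑' j, lam i j) atTop (𝓝 1)) ∧ A.Countable ∧ Good A then
    ⟨(mainStep h.1 h.2.1 h.2.2.1 h.2.2.2.1 h.2.2.2.2).choose,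
      (mainStep h.1 h.2.1 h.2.2.1 h.2.2.2.1 h.2.2.2.2).choose_spec.choose⟩
  else ⟨∅, ∅⟩

lemma pickPair_spec {lam : ℕ → ℕ → ℝ}
    (h1 : ∀ j, Tendsto (fun i => lam i j) atTop (𝓝 0))
    (h2 : ∀ i, Summable fun j => |lam i j|)
    (h3 : Tendsto (fun i => ∑' j, lam i j) atTop (𝓝 1))
    {A : Set (Set ℕ)} (hAc : A.Countable) (hG : Good A) :
    Good (insert (pickPair lam A).2 (insert (pickPair lam A).1 A)) ∧
    (∃ N ∈ insert (pickPair lam A).2 (insert (pickPair lam A).1 A), Fails lam N) ∧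
    (pickPair lam A).2.Infinite ∧ (∀ N ∈ A, ((pickPair lam A).2 ∩ N).Finite) := by
  have hc : (∀ j, Tendsto (fun i => lam i j) atTop (𝓝 0)) ∧
      (∀ i, Summable fun j => |lam i j|) ∧
      (Tendsto (fun i => ∑' j, lam i j) atTop (𝓝 1)) ∧ A.Countable ∧ Good A :=
    ⟨h1, h2, h3, hAc, hG⟩
  classical
  simp only [pickPair, dif_pos hc]
  exact (mainStep hc.1 hc.2.1 hc.2.2.1 hc.2.2.2.1 hc.2.2.2.2).choose_spec.choose_spec

/-- The transfinite construction: the (≤ 2)-element family added at stage `o`. -/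
noncomputable def fam (lam : ↥(Set.Iio ((Cardinal.aleph 1).ord : Ordinal.{u})) → ℕ → ℕ → ℝ) :
    Ordinal.{u} → Set (Set ℕ) :=
  Ordinal.lt_wf.fix fun o IH =>
    if h : o < (Cardinal.aleph 1).ord then
      {(pickPair (lam ⟨o, h⟩) (⋃ (o' : Ordinal) (h' : o' < o), IH o' h')).1,
       (pickPair (lam ⟨o, h⟩) (⋃ (o' : Ordinal) (h' : o' < o), IH o' h')).2}
    else ∅

/-- The cumulative family before stage `o`. -/
noncomputable def cum (lam : ↥(Set.Iio ((Cardinal.aleph 1).ord : Ordinal.{u})) → ℕ → ℕ → ℝ)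
    (o : Ordinal.{u}) : Set (Set ℕ) :=
  ⋃ (o' : Ordinal) (h' : o' < o), fam lam o'

lemma fam_eq (lam : ↥(Set.Iio ((Cardinal.aleph 1).ord : Ordinal.{u})) → ℕ → ℕ → ℝ) (o : Ordinal.{u}) :
    fam lam o = if h : o < (Cardinal.aleph 1).ord then
      {(pickPair (lam ⟨o, h⟩) (cum lam o)).1, (pickPair (lam ⟨o, h⟩) (cum lam o)).2}
    else ∅ := by
  unfold fam
  rw [WellFounded.fix_eq]
  rfl

variable {lam : ↥(Set.Iio ((Cardinal.aleph 1).ord : Ordinal.{u})) → ℕ → ℕ → ℝ}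

lemma mem_cum {N : Set ℕ} {o : Ordinal.{u}} :
    N ∈ cum lam o ↔ ∃ o' , o' < o ∧ N ∈ fam lam o' := by
  simp [cum, Set.mem_iUnion]

lemma cum_mono {a b : Ordinal.{u}} (h : a ≤ b) : cum lam a ⊆ cum lam b := by
  intro N hN
  obtain ⟨o', ho', hNf⟩ := mem_cum.mp hN
  exact mem_cum.mpr ⟨o', lt_of_lt_of_le ho' h, hNf⟩

lemma fam_subset_cum {a b : Ordinal.{u}} (h : a < b) : fam lam a ⊆ cum lam b :=
  fun N hN => mem_cum.mpr ⟨a, h, hN⟩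

lemma stage_mono {a b : Ordinal.{u}} (h : a ≤ b) :
    cum lam a ∪ fam lam a ⊆ cum lam b ∪ fam lam b := by
  rcases lt_or_eq_of_le h with h' | rfl
  · intro N hN
    rcases hN with hN | hN
    · exact Or.inl (cum_mono h'.le hN)
    · exact Or.inl (fam_subset_cum h' hN)
  · exact subset_rfl

lemma fam_countable (o : Ordinal.{u}) : (fam lam o).Countable := by
  rw [fam_eq]
  split
  · exact (Set.countable_singleton _).insert _
  · exact Set.countable_empty

lemma cum_countable {o : Ordinal.{u}} (h : o < (Cardinal.aleph 1).ord) :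
    (cum lam o).Countable := by
  have hIio : (Set.Iio o).Countable := by
    rw [Cardinal.countable_iff_lt_aleph_one, Ordinal.mk_Iio_ordinal,
      Cardinal.lift_lt_aleph_one]
    exact Cardinal.lt_ord.mp h
  have heq : cum lam o = ⋃ o' ∈ Set.Iio o, fam lam o' := rfl
  rw [heq]
  exact hIio.biUnion (fun o' _ => fam_countable o')

lemma cum_union_fam (o : Ordinal.{u}) (h : o < (Cardinal.aleph 1).ord) :
    cum lam o ∪ fam lam o =
      insert (pickPair (lam ⟨o, h⟩) (cum lam o)).2
        (insert (pickPair (lam ⟨o, h⟩) (cum lam o)).1 (cum lam o)) := by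
  rw [fam_eq, dif_pos h]
  ext x
  simp only [Set.mem_union, Set.mem_insert_iff, Set.mem_singleton_iff]
  tauto

lemma good_stage
    (h1 : ∀ α j, Tendsto (fun i => lam α i j) atTop (𝓝 0))
    (h2 : ∀ α i, Summable (fun j => |lam α i j|))
    (h3 : ∀ α, Tendsto (fun i => ∑' j, lam α i j) atTop (𝓝 1)) :
    ∀ o : Ordinal.{u}, Good (cum lam o ∪ fam lam o) ∧ Good (cum lam o) := by
  intro o
  induction o using Ordinal.induction with
  | h o IH =>
  have hGc : Good (cum lam o) := by
    refine ⟨?_, ?_, ?_⟩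
    · intro N hN
      obtain ⟨o', ho', hNf⟩ := mem_cum.mp hN
      exact (IH o' ho').1.1 N (Or.inr hNf)
    · intro N1 hN1 N2 hN2 hne
      obtain ⟨o1, ho1, hN1f⟩ := mem_cum.mp hN1
      obtain ⟨o2, ho2, hN2f⟩ := mem_cum.mp hN2
      rcases le_total o1 o2 with hle | hle
      · exact (IH o2 ho2).1.2.1 (stage_mono hle (Or.inr hN1f)) (Or.inr hN2f) hne
      · have := (IH o1 ho1).1.2.1 (Or.inr hN1f) (stage_mono hle (Or.inr hN2f)) hne
        exact this
    · have haux : ∀ B : Finset (Set ℕ), ↑B ⊆ cum lam o →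
          B = ∅ ∨ ∃ o', o' < o ∧ (B : Set (Set ℕ)) ⊆ cum lam o' ∪ fam lam o' := by
        classical
        intro B
        induction B using Finset.induction_on with
        | empty => exact fun _ => Or.inl rfl
        | @insert N B' hNB ih =>
          intro hsub
          obtain ⟨oN, hoN, hNf⟩ :=
            mem_cum.mp (hsub (Finset.mem_insert_self _ _))
          rcases ih (fun x hx => hsub (Finset.mem_insert_of_mem hx)) with rfl | ⟨o', ho', hs'⟩
          · refine Or.inr ⟨oN, hoN, ?_⟩
            intro x hx
            rw [Finset.coe_insert, Finset.coe_empty] at hx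
            rcases Set.mem_insert_iff.mp hx with rfl | hx
            · exact Or.inr hNf
            · exact absurd hx (Set.notMem_empty x)
          · refine Or.inr ⟨max o' oN, max_lt ho' hoN, ?_⟩
            intro x hx
            rw [Finset.coe_insert] at hx
            rcases Set.mem_insert_iff.mp hx with rfl | hx
            · exact stage_mono (le_max_right _ _) (Or.inr hNf)
            · exact stage_mono (le_max_left _ _) (hs' hx)
      intro B hB
      rcases haux B hB with rfl | ⟨o', ho', hs⟩
      · simpa using Set.infinite_univ
      · exact (IH o' ho').1.2.2 B hs
  refine ⟨?_, hGc⟩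
  by_cases h : o < (Cardinal.aleph 1).ord
  · rw [cum_union_fam o h]
    exact (pickPair_spec (h1 ⟨o, h⟩) (h2 ⟨o, h⟩) (h3 ⟨o, h⟩) (cum_countable h) hGc).1
  · rw [fam_eq, dif_neg h, Set.union_empty]
    exact hGc

end S17

/-- Given, for each countable ordinal `α < ω₁`, a matrix `(λ^α i j)` with
(i) columns tending to `0`, (ii) absolutely summable rows, (iii) row sums tending to `1`,
there exists an almost disjoint family `F` such that for every `α < ω₁` some `N ∈ F`
satisfies that `(Σ_{j ∈ N} λ^α i j)_i` does not converge to `0`. -/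
theorem statement17
    (lam : ↥(Set.Iio (Cardinal.aleph 1).ord) → ℕ → ℕ → ℝ)
    (h1 : ∀ α j, Tendsto (fun i => lam α i j) atTop (𝓝 0))
    (h2 : ∀ α i, Summable (fun j => |lam α i j|))
    (h3 : ∀ α, Tendsto (fun i => ∑' j, lam α i j) atTop (𝓝 1)) :
    ∃ F : Set (Set ℕ), F.Infinite ∧ (∀ M ∈ F, M.Infinite) ∧
      (∀ M ∈ F, ∀ M' ∈ F, M ≠ M' → (M ∩ M').Finite) ∧
      ∀ α, ∃ M ∈ F,
        ¬ Tendsto (fun i => ∑' j : ↥M, lam α i (j : ℕ)) atTop (𝓝 0) := by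
  classical
  have hGood := S17.good_stage h1 h2 h3
  have hGK : S17.Good (S17.cum lam (Cardinal.aleph 1).ord) := (hGood (Cardinal.aleph 1).ord).2
  have hnatlt : ∀ n : ℕ, ((n : Ordinal)) < (Cardinal.aleph 1).ord := by
    intro n
    rw [Cardinal.lt_ord, Ordinal.card_nat]
    exact lt_trans (Cardinal.nat_lt_aleph0 n) Cardinal.aleph0_lt_aleph_one
  refine ⟨S17.cum lam (Cardinal.aleph 1).ord, ?_, hGK.1, fun M hM M' hM' hne => hGK.2.1 hM hM' hne, ?_⟩
  · -- infinitude of the family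
    have hPat_mem : ∀ (o : Ordinal) (h : o < (Cardinal.aleph 1).ord),
        (S17.pickPair (lam ⟨o, h⟩) (S17.cum lam o)).2 ∈ S17.fam lam o := by
      intro o h
      rw [S17.fam_eq, dif_pos h]
      exact Set.mem_insert_of_mem _ rfl
    have hspec : ∀ (o : Ordinal) (h : o < (Cardinal.aleph 1).ord),
        ((S17.pickPair (lam ⟨o, h⟩) (S17.cum lam o)).2).Infinite ∧
        (∀ N ∈ S17.cum lam o, (((S17.pickPair (lam ⟨o, h⟩) (S17.cum lam o)).2) ∩ N).Finite) :=
      fun o h => (S17.pickPair_spec (h1 ⟨o, h⟩) (h2 ⟨o, h⟩) (h3 ⟨o, h⟩)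
        (S17.cum_countable h) (hGood o).2).2.2
    have hne : ∀ (o1 o2 : Ordinal) (ho1 : o1 < (Cardinal.aleph 1).ord) (ho2 : o2 < (Cardinal.aleph 1).ord), o1 < o2 →
        (S17.pickPair (lam ⟨o1, ho1⟩) (S17.cum lam o1)).2 ≠
        (S17.pickPair (lam ⟨o2, ho2⟩) (S17.cum lam o2)).2 := by
      intro o1 o2 ho1 ho2 hlt heq
      have hmem : (S17.pickPair (lam ⟨o1, ho1⟩) (S17.cum lam o1)).2 ∈ S17.cum lam o2 :=
        S17.fam_subset_cum hlt (hPat_mem o1 ho1)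
      have hfin := (hspec o2 ho2).2 _ hmem
      rw [← heq, Set.inter_self] at hfin
      exact (hspec o1 ho1).1 hfin
    refine Set.infinite_of_injective_forall_mem
      (f := fun n : ℕ => (S17.pickPair (lam ⟨(n : Ordinal), hnatlt n⟩)
        (S17.cum lam (n : Ordinal))).2) ?_ ?_
    · intro a b hab
      by_contra hab'
      rcases Nat.lt_or_ge a b with h | h
      · exact hne _ _ (hnatlt a) (hnatlt b) (by exact_mod_cast h) hab
      · have h' : b < a := by omega
        exact hne _ _ (hnatlt b) (hnatlt a) (by exact_mod_cast h') hab.symm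
    · intro n
      exact S17.fam_subset_cum (hnatlt n) (hPat_mem (n : Ordinal) (hnatlt n))
  · -- witnesses
    intro α
    have hα : (α : Ordinal) < (Cardinal.aleph 1).ord := α.2
    have hw := (S17.pickPair_spec (h1 ⟨α.1, hα⟩) (h2 ⟨α.1, hα⟩) (h3 ⟨α.1, hα⟩)
      (S17.cum_countable hα) (hGood α.1).2).2.1
    obtain ⟨N, hNmem, hNf⟩ := hw
    rw [← S17.cum_union_fam α.1 hα] at hNmem
    refine ⟨N, ?_, ?_⟩
    · rcases hNmem with hNmem | hNmem
      · exact S17.cum_mono (le_of_lt hα) hNmem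
      · exact S17.fam_subset_cum hα hNmem
    · exact hNf
end
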